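/- arXiv:2605.27982 — 6 statements merged into one kernel-verified Lean document; each statement's English description precedes it below -/
import Mathlib

section
/- For every integer m ≥ 2, the number of endomorphisms of the dihedral group of order 2m equals m² + 1 if m is odd, and m² + 4m + 4 if m is even. That is, Nat.card (DihedralGroup m →* DihedralGroup m) = m² + 1 for odd m and = m² + 4m + 4 for even m. -/
open DihedralGroup

section Basic
variable {m : ℕ}

lemma zpow_congr_aux {G : Type*} [Group G] {m : ℕ} {x : G} (hx : x ^ m = 1) {a b : ℤ}
    (h : (a : ZMod m) = b) : x ^ a = x ^ b := by
  rw [ZMod.intCast_eq_intCast_iff] at h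
  obtain ⟨k, hk⟩ := h.dvd
  have hb : b = a + m * k := by linarith
  rw [hb, zpow_add, zpow_mul, zpow_natCast, hx, one_zpow, mul_one]

lemma conj_zpow_aux {G : Type*} [Group G] {x y : G} (hy : y * y = 1) (hc : y * x * y = x⁻¹)
    (k : ℤ) : x ^ k * y = y * x ^ (-k) := by
  have hyi : y⁻¹ = y := inv_eq_of_mul_eq_one_right hy
  have h1 : y * x ^ k * y⁻¹ = x ^ (-k) := by
    rw [← conj_zpow, hyi, hc, inv_zpow, zpow_neg]
  have h2 : y * x ^ (-k) = x ^ k * y := by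
    rw [← h1, hyi, ← mul_assoc, ← mul_assoc, hy, one_mul]
  exact h2.symm

lemma r_pow (a : ZMod m) (k : ℕ) : (r a : DihedralGroup m) ^ k = r ((k : ZMod m) * a) := by
  induction k with
  | zero => simp [one_def, -r_zero]
  | succ k ih => rw [pow_succ, ih, r_mul_r]; congr 1; push_cast; ring

lemma r_pow_m (a : ZMod m) : (r a : DihedralGroup m) ^ m = 1 := by
  rw [_root_.r_pow, ZMod.natCast_self, zero_mul, one_def]

lemma inv_r (a : ZMod m) : (r a : DihedralGroup m)⁻¹ = r (-a) :=
  inv_eq_of_mul_eq_one_right (by rw [r_mul_r, add_neg_cancel, one_def])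

lemma inv_sr (a : ZMod m) : (sr a : DihedralGroup m)⁻¹ = sr a :=
  inv_eq_of_mul_eq_one_right (sr_mul_self a)

lemma sr_pow_m (a : ZMod m) : (sr a : DihedralGroup m) ^ m = 1 ↔ Even m := by
  rw [← orderOf_dvd_iff_pow_eq_one, orderOf_sr, Nat.even_iff]
  omega

end Basic
section Hom
variable {m : ℕ} [NeZero m]

/-- The underlying function of an endomorphism sending `r 1 ↦ x`, `sr 0 ↦ y`. -/
def mkEndFun (x y : DihedralGroup m) : DihedralGroup m → DihedralGroup m
  | r i => x ^ (i.val : ℤ)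
  | sr i => y * x ^ (i.val : ℤ)

lemma valZ_cast (i : ZMod m) : (((i.val : ℤ)) : ZMod m) = i := by
  push_cast
  exact ZMod.natCast_zmod_val i

/-- The endomorphism of the dihedral group sending `r 1 ↦ x`, `sr 0 ↦ y`. -/
def mkHom (x y : DihedralGroup m) (hx : x ^ m = 1) (hy : y * y = 1)
    (hc : y * x * y = x⁻¹) : DihedralGroup m →* DihedralGroup m where
  toFun := mkEndFun x y
  map_one' := by
    rw [one_def]
    show x ^ (((0 : ZMod m)).val : ℤ) = 1
    simp
  map_mul' := by
    have key : ∀ a b : ℤ, (a : ZMod m) = (b : ZMod m) → x ^ a = x ^ b :=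
      fun a b h => zpow_congr_aux hx h
    rintro (i | i) (j | j)
    · show x ^ (((i + j).val : ℤ)) = x ^ ((i.val : ℤ)) * x ^ ((j.val : ℤ))
      rw [← zpow_add]
      exact key _ _ (by rw [valZ_cast]; push_cast [ZMod.natCast_zmod_val]; ring)
    · show y * x ^ (((j - i).val : ℤ)) = x ^ ((i.val : ℤ)) * (y * x ^ ((j.val : ℤ)))
      rw [← mul_assoc, conj_zpow_aux hy hc, mul_assoc, ← zpow_add]
      congr 1
      exact key _ _ (by rw [valZ_cast]; push_cast [ZMod.natCast_zmod_val]; ring)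
    · show y * x ^ (((i + j).val : ℤ)) = y * x ^ ((i.val : ℤ)) * x ^ ((j.val : ℤ))
      rw [mul_assoc, ← zpow_add]
      congr 1
      exact key _ _ (by rw [valZ_cast]; push_cast [ZMod.natCast_zmod_val]; ring)
    · show x ^ (((j - i).val : ℤ)) = y * x ^ ((i.val : ℤ)) * (y * x ^ ((j.val : ℤ)))
      rw [mul_assoc, ← mul_assoc (x ^ ((i.val : ℤ))), conj_zpow_aux hy hc,
        ← mul_assoc, ← mul_assoc, hy, one_mul, ← zpow_add]
      exact key _ _ (by rw [valZ_cast]; push_cast [ZMod.natCast_zmod_val]; ring)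

end Hom
/-- The defining relations predicate for endomorphism images of `(r 1, sr 0)`. -/
def dP (m : ℕ) (p : DihedralGroup m × DihedralGroup m) : Prop :=
  p.1 ^ m = 1 ∧ p.2 * p.2 = 1 ∧ p.2 * p.1 * p.2 = p.1⁻¹

instance (m : ℕ) : DecidablePred (dP m) := fun p => by unfold dP; infer_instance

section Equiv
variable {m : ℕ} [NeZero m]

/-- Endomorphisms correspond to pairs satisfying the dihedral relations. -/
def endEquiv (hm : 2 ≤ m) :
    (DihedralGroup m →* DihedralGroup m) ≃ { p : DihedralGroup m × DihedralGroup m // dP m p } where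
  toFun f := ⟨(f (r 1), f (sr 0)), by
    refine ⟨?_, ?_, ?_⟩
    · rw [← map_pow, r_one_pow, ZMod.natCast_self, ← one_def, map_one]
    · rw [← map_mul, sr_mul_self, map_one]
    · rw [← map_mul, ← map_mul, sr_mul_r, zero_add, sr_mul_sr, zero_sub, ← _root_.inv_r, map_inv]⟩
  invFun p := mkHom p.1.1 p.1.2 p.2.1 p.2.2.1 p.2.2.2
  left_inv f := by
    apply MonoidHom.ext
    rintro (i | i)
    · show f (r 1) ^ ((i.val : ℤ)) = f (r i)
      rw [zpow_natCast, ← map_pow, r_one_pow, ZMod.natCast_zmod_val]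
    · show f (sr 0) * f (r 1) ^ ((i.val : ℤ)) = f (sr i)
      rw [zpow_natCast, ← map_pow, r_one_pow, ZMod.natCast_zmod_val, ← map_mul,
        sr_mul_r, zero_add]
  right_inv p := by
    have h1 : ((1 : ZMod m)).val = 1 := by
      rw [ZMod.val_one_eq_one_mod]; exact Nat.mod_eq_of_lt hm
    apply Subtype.ext
    apply Prod.ext
    · show p.1.1 ^ (((1 : ZMod m)).val : ℤ) = p.1.1
      rw [h1, Nat.cast_one, zpow_one]
    · show p.1.2 * p.1.1 ^ (((0 : ZMod m)).val : ℤ) = p.1.2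
      simp

end Equiv
section Cases
variable {m : ℕ}

lemma dP_rr (a b : ZMod m) : dP m (r a, r b) ↔ a + a = 0 ∧ b + b = 0 := by
  unfold dP
  rw [_root_.inv_r]
  simp only [r_pow_m, r_mul_r, ← one_def, true_and, one_def, r.injEq]
  constructor
  · rintro ⟨h1, h2⟩
    exact ⟨by linear_combination h2 - h1, h1⟩
  · rintro ⟨h1, h2⟩
    exact ⟨h2, by linear_combination h1 + h2⟩

lemma dP_rsr (a b : ZMod m) : dP m (r a, sr b) ↔ True := by
  unfold dP
  simp only [r_pow_m, sr_mul_self, _root_.inv_r, sr_mul_r, r_mul_sr, sr_mul_sr, true_and, iff_true,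
    r.injEq]
  ring

lemma dP_srr (a b : ZMod m) : dP m (sr a, r b) ↔ Even m ∧ b + b = 0 := by
  unfold dP
  rw [sr_pow_m, _root_.inv_sr]
  simp only [r_mul_r, r_mul_sr, sr_mul_r, one_def, r.injEq, sr.injEq]
  constructor
  · rintro ⟨h1, h2, h3⟩
    exact ⟨h1, h2⟩
  · rintro ⟨h1, h2⟩
    exact ⟨h1, h2, by ring⟩

lemma dP_srsr (a b : ZMod m) : dP m (sr a, sr b) ↔ Even m ∧ b + b = a + a := by
  unfold dP
  rw [sr_pow_m, _root_.inv_sr]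
  simp only [sr_mul_sr, r_mul_sr, ← one_def, sub_self, true_and, sr.injEq]
  constructor
  · rintro ⟨h1, h2⟩
    exact ⟨h1, by linear_combination h2⟩
  · rintro ⟨h1, h2⟩
    exact ⟨h1, by linear_combination h2⟩

end Cases
section Torsion
variable {m : ℕ} [NeZero m]

/-- The 2-torsion elements of `ZMod m`. -/
def T2 (m : ℕ) [NeZero m] : Finset (ZMod m) := Finset.univ.filter fun c => c + c = 0

lemma mem_T2 {c : ZMod m} : c ∈ T2 m ↔ c + c = 0 := by
  simp [T2]

lemma card_T2_odd (hm : Odd m) : (T2 m).card = 1 := by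
  have : T2 m = {0} := by
    ext c
    simp [mem_T2, ZMod.add_self_eq_zero_iff_eq_zero hm]
  rw [this, Finset.card_singleton]

lemma card_T2_even (hm2 : 2 ≤ m) (hm : Even m) : (T2 m).card = 2 := by
  obtain ⟨k, hk⟩ := hm
  have hk2 : m / 2 = k := by omega
  have hvk : ((m / 2 : ℕ) : ZMod m).val = m / 2 := ZMod.val_cast_of_lt (by omega)
  have : T2 m = {0, ((m / 2 : ℕ) : ZMod m)} := by
    ext c
    rw [mem_T2, ← neg_eq_iff_add_eq_zero, ZMod.neg_eq_self_iff]
    simp only [Finset.mem_insert, Finset.mem_singleton]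
    constructor
    · rintro (rfl | h)
      · exact Or.inl rfl
      · refine Or.inr ?_
        have : c.val = m / 2 := by omega
        rw [← ZMod.natCast_zmod_val c, this]
    · rintro (rfl | rfl)
      · exact Or.inl rfl
      · exact Or.inr (by omega)
  rw [this, Finset.card_insert_of_notMem, Finset.card_singleton]
  simp only [Finset.mem_singleton]
  intro h
  have := hvk ▸ congrArg ZMod.val h
  rw [ZMod.val_zero] at this
  omega

end Torsion
section CountOdd
variable {m : ℕ} [NeZero m]

lemma filter_dP_odd (hm : Odd m) :
    Finset.univ.filter (dP m) = insert ((1 : DihedralGroup m), (1 : DihedralGroup m))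
      ((Finset.univ : Finset (ZMod m × ZMod m)).image fun p => (r p.1, sr p.2)) := by
  have hodd : ¬ Even m := Nat.not_even_iff_odd.mpr hm
  ext ⟨x, y⟩
  obtain (a | a) := x <;> obtain (b | b) := y <;>
    simp [dP_rr, dP_rsr, dP_srr, dP_srsr, hodd, one_def, -r_zero, Prod.ext_iff,
      ZMod.add_self_eq_zero_iff_eq_zero hm, eq_comm]

lemma card_dP_odd (hm : Odd m) :
    (Finset.univ.filter (dP m)).card = m ^ 2 + 1 := by
  rw [filter_dP_odd hm, Finset.card_insert_of_notMem, Finset.card_image_of_injective,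
    Finset.card_univ, Fintype.card_prod, ZMod.card]
  · ring
  · rintro ⟨a, b⟩ ⟨c, d⟩ h
    simpa [Prod.ext_iff] using h
  · simp [one_def, -r_zero, Prod.ext_iff]

end CountOdd
section CountEven
variable {m : ℕ} [NeZero m]

lemma filter_dP_even (hm : Even m) :
    Finset.univ.filter (dP m) =
      ((Finset.univ : Finset (ZMod m × ZMod m)).image fun p => (r p.1, sr p.2)) ∪
      ((Finset.univ ×ˢ T2 m).image fun p => (sr p.1, r p.2)) ∪
      ((Finset.univ ×ˢ T2 m).image fun p => (sr p.1, sr (p.2 + p.1))) ∪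
      ((T2 m ×ˢ T2 m).image fun p => (r p.1, r p.2)) := by
  ext ⟨x, y⟩
  obtain (a | a) := x <;> obtain (b | b) := y <;>
    simp only [Finset.mem_filter, Finset.mem_univ, true_and, Finset.mem_union, Finset.mem_image,
      Finset.mem_product, mem_T2, dP_rr, dP_rsr, dP_srr, dP_srsr, hm, true_and, Prod.mk.injEq,
      r.injEq, sr.injEq, reduceCtorEq, and_false, false_and, exists_false, or_false, false_or,
      Prod.exists, exists_and_left, exists_eq_left]
  · constructor
    · rintro ⟨h1, h2⟩
      exact ⟨a, b, ⟨h1, h2⟩, rfl, rfl⟩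
    · rintro ⟨a', b', ⟨h1, h2⟩, rfl, rfl⟩
      exact ⟨h1, h2⟩
  · exact ⟨fun _ => ⟨b, rfl⟩, fun _ => trivial⟩
  · constructor
    · intro h1
      exact ⟨a, b, h1, rfl, rfl⟩
    · rintro ⟨a', b', h1, rfl, rfl⟩
      exact h1
  · constructor
    · intro h1
      exact ⟨a, b - a, by linear_combination h1, rfl, by ring⟩
    · rintro ⟨a', c, h1, rfl, rfl⟩
      linear_combination h1

lemma card_dP_even (hm2 : 2 ≤ m) (hm : Even m) :
    (Finset.univ.filter (dP m)).card = m ^ 2 + 4 * m + 4 := by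
  have disj : ∀ (s t : Finset (ZMod m × ZMod m)) (f g : ZMod m × ZMod m → DihedralGroup m × DihedralGroup m),
      (∀ p q, f p ≠ g q) → Disjoint (s.image f) (t.image g) := by
    intro s t f g h
    rw [Finset.disjoint_left]
    rintro x h1 h2
    simp only [Finset.mem_image] at h1 h2
    obtain ⟨p, -, rfl⟩ := h1
    obtain ⟨q, -, hq⟩ := h2
    exact h p q hq.symm
  have hrs : ∀ p q : ZMod m × ZMod m,
      ((r p.1 : DihedralGroup m), (sr p.2 : DihedralGroup m)) ≠ (sr q.1, r q.2) := by
    intro p q h; simp [Prod.ext_iff] at h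
  rw [filter_dP_even hm,
    Finset.card_union_of_disjoint, Finset.card_union_of_disjoint, Finset.card_union_of_disjoint,
    Finset.card_image_of_injective, Finset.card_image_of_injective,
    Finset.card_image_of_injective, Finset.card_image_of_injective,
    Finset.card_univ, Fintype.card_prod, ZMod.card, Finset.card_product, Finset.card_product, Finset.card_univ, ZMod.card, card_T2_even hm2 hm]
  · ring
  · rintro ⟨a, b⟩ ⟨c, d⟩ h
    simpa [Prod.ext_iff] using h
  · rintro ⟨a, b⟩ ⟨c, d⟩ h
    simp only [Prod.ext_iff, sr.injEq] at h
    obtain ⟨h1, h2⟩ := h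
    subst h1
    have hbd : b = d := by linear_combination h2
    subst hbd
    rfl
  · rintro ⟨a, b⟩ ⟨c, d⟩ h
    simpa [Prod.ext_iff] using h
  · rintro ⟨a, b⟩ ⟨c, d⟩ h
    simpa [Prod.ext_iff] using h
  · exact disj _ _ _ _ (by intro p q h; simp [Prod.ext_iff] at h)
  · refine Finset.disjoint_union_left.mpr ⟨?_, ?_⟩ <;>
      exact disj _ _ _ _ (by intro p q h; simp [Prod.ext_iff] at h)
  · refine Finset.disjoint_union_left.mpr ⟨Finset.disjoint_union_left.mpr ⟨?_, ?_⟩, ?_⟩ <;>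
      exact disj _ _ _ _ (by intro p q h; simp [Prod.ext_iff] at h)

end CountEven

theorem dihedral_endomorphism_count (m : ℕ) (hm : 2 ≤ m) :
    (Odd m → Nat.card (DihedralGroup m →* DihedralGroup m) = m ^ 2 + 1) ∧
    (Even m → Nat.card (DihedralGroup m →* DihedralGroup m) = m ^ 2 + 4 * m + 4) := by
  haveI : NeZero m := ⟨by omega⟩
  have key : Nat.card (DihedralGroup m →* DihedralGroup m) = (Finset.univ.filter (dP m)).card := by
    rw [Nat.card_congr (endEquiv hm), Nat.card_eq_fintype_card, Fintype.card_subtype]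
  exact ⟨fun h => by rw [key, card_dP_odd h], fun h => by rw [key, card_dP_even hm h]⟩
end

section
/- The proportion of endomorphisms of the symmetric group on n letters that are automorphisms tends to 1: the sequence n ↦ (Nat.card {φ : Equiv.Perm (Fin n) →* Equiv.Perm (Fin n) // Function.Bijective φ} : ℝ) / (Nat.card (Equiv.Perm (Fin n) →* Equiv.Perm (Fin n))) tends to 1 as n → ∞ (Filter.Tendsto along atTop to nhds 1). -/
open Equiv Equiv.Perm

lemma succ_pow_le_three_mul (n : ℕ) (hn : 1 ≤ n) : (n+1)^n ≤ 3 * n^n := by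
  have h1 : ((n:ℝ)+1)^n ≤ 3 * (n:ℝ)^n := by
    have hn0 : (0:ℝ) < n := by positivity
    have h2 : (n:ℝ) + 1 = n * (1 + 1/n) := by field_simp
    have h3 : (1 + 1/(n:ℝ)) ≤ Real.exp (1/n) := by
      have := Real.add_one_le_exp (1/(n:ℝ)); linarith
    have h4 : (1 + 1/(n:ℝ))^n ≤ (Real.exp (1/n))^n :=
      pow_le_pow_left₀ (by positivity) h3 n
    have h5 : (Real.exp (1/(n:ℝ)))^n = Real.exp 1 := by
      rw [← Real.exp_nat_mul]
      congr 1
      field_simp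
    have h6 : Real.exp 1 ≤ 3 := by
      have := Real.exp_one_lt_d9; linarith
    calc ((n:ℝ)+1)^n = (n:ℝ)^n * (1 + 1/n)^n := by rw [h2, mul_pow]
      _ ≤ (n:ℝ)^n * 3 := by
          refine mul_le_mul_of_nonneg_left ?_ (by positivity)
          calc (1 + 1/(n:ℝ))^n ≤ (Real.exp (1/n))^n := h4
            _ = Real.exp 1 := h5
            _ ≤ 3 := h6
      _ = 3 * (n:ℝ)^n := by ring
  exact_mod_cast h1

lemma nine_n_pow_le (n : ℕ) (hn : 67 ≤ n) : (9*n)^n ≤ (Nat.factorial n)^2 := by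
  induction n with
  | zero => omega
  | succ m ih =>
    rcases Nat.lt_or_ge m 67 with hm | hm
    · have : m = 66 := by omega
      subst this
      norm_num [Nat.factorial]
    · have ihm := ih hm
      have h3 : (m+1)^m ≤ 3 * m^m := succ_pow_le_three_mul m (by omega)
      have key : (9*(m+1))^(m+1) ≤ (m+1)^2 * (Nat.factorial m)^2 := by
        calc (9*(m+1))^(m+1) = 9*(m+1) * (9^m * (m+1)^m) := by
              rw [pow_succ, mul_pow]; ring
          _ ≤ 9*(m+1) * (9^m * (3 * m^m)) := by
              exact Nat.mul_le_mul_left _ (Nat.mul_le_mul_left _ h3)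
          _ = 27*(m+1) * (9*m)^m := by ring
          _ ≤ 27*(m+1) * (Nat.factorial m)^2 := Nat.mul_le_mul_left _ ihm
          _ ≤ (m+1)*(m+1) * (Nat.factorial m)^2 :=
              Nat.mul_le_mul (Nat.mul_le_mul (by omega) le_rfl) le_rfl
          _ = (m+1)^2 * (Nat.factorial m)^2 := by ring
      calc (9*(m+1))^(m+1) ≤ (m+1)^2 * (Nat.factorial m)^2 := key
        _ = ((m+1) * Nat.factorial m)^2 := by ring
        _ = (Nat.factorial (m+1))^2 := by rw [Nat.factorial_succ]

lemma three_pow_mul_le_factorial (n : ℕ) (hn : 67 ≤ n) :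
    3^n * n^(n/2) ≤ Nat.factorial n := by
  have h : (3^n * n^(n/2))^2 ≤ (Nat.factorial n)^2 := by
    have h9 : (3:ℕ)^n * 3^n = 9^n := by
      rw [← pow_add, ← two_mul, pow_mul]
      norm_num
    calc (3^n * n^(n/2))^2 = (3^n * 3^n) * (n^(n/2) * n^(n/2)) := by ring
      _ = 9^n * (n^(n/2) * n^(n/2)) := by rw [h9]
      _ = 9^n * n^(n/2 + n/2) := by rw [pow_add]
      _ ≤ 9^n * n^n := by
          refine Nat.mul_le_mul_left _ (Nat.pow_le_pow_right (by omega) (by omega))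
      _ = (9*n)^n := by rw [mul_pow]
      _ ≤ (Nat.factorial n)^2 := nine_n_pow_le n hn
  exact Nat.pow_le_pow_iff_left (by norm_num) |>.mp h


lemma three_cycle_all_mem {n : ℕ} (N : Subgroup (Equiv.Perm (Fin n))) [hNn : N.Normal]
    {t u : Equiv.Perm (Fin n)} (ht : t.IsThreeCycle) (hu : u.IsThreeCycle)
    (htN : t ∈ N) : u ∈ N := by
  have hconj : IsConj t u := Equiv.Perm.isConj_of_cycleType_eq (ht.trans hu.symm)
  rcases isConj_iff.mp hconj with ⟨g, hg⟩
  exact hg ▸ hNn.conj_mem t htN g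

lemma normal_ge_alternating {n : ℕ} (hn : 5 ≤ n) (N : Subgroup (Equiv.Perm (Fin n)))
    [hNn : N.Normal] (hN : N ≠ ⊥) : alternatingGroup (Fin n) ≤ N := by
  classical
  -- a nontrivial element
  obtain ⟨σ, hσN, hσ1⟩ : ∃ σ ∈ N, σ ≠ 1 := by
    by_contra h
    push_neg at h
    exact hN ((Subgroup.eq_bot_iff_forall N).mpr h)
  obtain ⟨a, ha⟩ : ∃ a, σ a ≠ a := by
    by_contra h
    push_neg at h
    exact hσ1 (Equiv.ext h)
  set b := σ a with hb
  obtain ⟨c, hc⟩ : ∃ c, c ∉ ({a, b, σ b} : Finset (Fin n)) := by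
    by_contra h
    push_neg at h
    have hsub : (Finset.univ : Finset (Fin n)) ⊆ {a, b, σ b} := fun x _ => h x
    have h1 := Finset.card_le_card hsub
    have h3 : ({a, b, σ b} : Finset (Fin n)).card ≤ 3 :=
      (Finset.card_insert_le _ _).trans (Nat.succ_le_succ
        ((Finset.card_insert_le _ _).trans (by simp)))
    simp only [Finset.card_univ, Fintype.card_fin] at h1
    omega
  simp only [Finset.mem_insert, Finset.mem_singleton, not_or] at hc
  obtain ⟨hca, hcb, hcσb⟩ := hc
  set d := σ c with hd
  have hba : b ≠ a := ha
  have hdb : d ≠ b := fun h => hca (σ.injective h)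
  set δ : Equiv.Perm (Fin n) := σ * (Equiv.swap a c * σ⁻¹ * (Equiv.swap a c)⁻¹) with hδdef
  have hδN : δ ∈ N := N.mul_mem hσN (hNn.conj_mem σ⁻¹ (N.inv_mem hσN) _)
  have hδ : δ = Equiv.swap b d * Equiv.swap a c := by
    have h1 : Equiv.swap b d = σ * Equiv.swap a c * σ⁻¹ := swap_apply_apply σ a c
    rw [hδdef, Equiv.swap_inv, h1]
    group
  -- find a three-cycle in N
  obtain ⟨t, htc, htN⟩ : ∃ t : Equiv.Perm (Fin n), t.IsThreeCycle ∧ t ∈ N := by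
    by_cases hda : d = a
    · refine ⟨δ, ?_, hδN⟩
      rw [hδ, hda, Equiv.swap_comm b a]
      exact isThreeCycle_swap_mul_swap_same hba.symm (Ne.symm hca) (Ne.symm hcb)
    · by_cases hdc : d = c
      · refine ⟨δ, ?_, hδN⟩
        rw [hδ, hdc, Equiv.swap_comm b c, Equiv.swap_comm a c]
        exact isThreeCycle_swap_mul_swap_same hcb hca hba
      · -- d ∉ {a, c}; pick a fifth point e
        obtain ⟨e, he⟩ : ∃ e, e ∉ ({a, b, c, d} : Finset (Fin n)) := by
          by_contra h
          push_neg at h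
          have hsub : (Finset.univ : Finset (Fin n)) ⊆ {a, b, c, d} := fun x _ => h x
          have h1 := Finset.card_le_card hsub
          have h4 : ({a, b, c, d} : Finset (Fin n)).card ≤ 4 :=
            (Finset.card_insert_le _ _).trans (Nat.succ_le_succ
              ((Finset.card_insert_le _ _).trans (Nat.succ_le_succ
                ((Finset.card_insert_le _ _).trans (by simp)))))
          simp only [Finset.card_univ, Fintype.card_fin] at h1
          omega
        simp only [Finset.mem_insert, Finset.mem_singleton, not_or] at he
        obtain ⟨hea, heb, hec, hed⟩ := he
        set γ : Equiv.Perm (Fin n) := Equiv.swap d e * δ * (Equiv.swap d e)⁻¹ with hγdef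
        have hγN : γ ∈ N := hNn.conj_mem δ hδN _
        have hγ : γ = Equiv.swap b e * Equiv.swap a c := by
          have h1 : Equiv.swap (Equiv.swap d e b) (Equiv.swap d e d)
              = Equiv.swap d e * Equiv.swap b d * (Equiv.swap d e)⁻¹ :=
            swap_apply_apply (Equiv.swap d e) b d
          have h2 : Equiv.swap (Equiv.swap d e a) (Equiv.swap d e c)
              = Equiv.swap d e * Equiv.swap a c * (Equiv.swap d e)⁻¹ :=
            swap_apply_apply (Equiv.swap d e) a c
          rw [Equiv.swap_apply_of_ne_of_ne (Ne.symm hdb) (Ne.symm heb), Equiv.swap_apply_left] at h1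
          rw [Equiv.swap_apply_of_ne_of_ne (Ne.symm hda) (Ne.symm hea),
            Equiv.swap_apply_of_ne_of_ne (Ne.symm hdc) (Ne.symm hec)] at h2
          rw [hγdef, hδ]
          calc Equiv.swap d e * (Equiv.swap b d * Equiv.swap a c) * (Equiv.swap d e)⁻¹
              = (Equiv.swap d e * Equiv.swap b d * (Equiv.swap d e)⁻¹)
                * (Equiv.swap d e * Equiv.swap a c * (Equiv.swap d e)⁻¹) := by group
            _ = Equiv.swap b e * Equiv.swap a c := by rw [← h1, ← h2]
        refine ⟨δ * γ⁻¹, ?_, N.mul_mem hδN (N.inv_mem hγN)⟩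
        have : δ * γ⁻¹ = Equiv.swap b d * Equiv.swap b e := by
          rw [hδ, hγ, mul_inv_rev, Equiv.swap_inv, Equiv.swap_inv]
          calc Equiv.swap b d * Equiv.swap a c * (Equiv.swap a c * Equiv.swap b e)
              = Equiv.swap b d * (Equiv.swap a c * Equiv.swap a c) * Equiv.swap b e := by group
            _ = Equiv.swap b d * Equiv.swap b e := by
                rw [Equiv.swap_mul_self, mul_one]
        rw [this]
        exact isThreeCycle_swap_mul_swap_same (Ne.symm hdb) (Ne.symm heb) (Ne.symm hed)
  rw [← closure_three_cycles_eq_alternating]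
  refine (Subgroup.closure_le N).mpr ?_
  intro u hu
  exact three_cycle_all_mem N htc hu htN

lemma orderIsoOfFin_congr {α : Type*} [LinearOrder α] {s t : Finset α} {k : ℕ}
    (h : s = t) (hs : s.card = k) (ht : t.card = k) (i : Fin k) :
    ((s.orderIsoOfFin hs i : α)) = (t.orderIsoOfFin ht i : α) := by
  subst h; rfl

lemma involution_card_le (n : ℕ) :
    Nat.card {x : Equiv.Perm (Fin n) // x^2 = 1} ≤ 2^n * n^(n/2) := by
  classical
  set m := n / 2 with hm
  have hinv : ∀ (σ : {x : Equiv.Perm (Fin n) // x^2 = 1}) (i : Fin n), σ.1 (σ.1 i) = i := by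
    intro σ i
    calc σ.1 (σ.1 i) = (σ.1 * σ.1) i := rfl
      _ = (σ.1 ^ 2) i := by rw [sq]
      _ = i := by rw [σ.2]; rfl
  have hsupp : ∀ σ : {x : Equiv.Perm (Fin n) // x^2 = 1},
      (Finset.univ.filter (fun i => i < σ.1 i)).card ≤ m := by
    intro σ
    set s := Finset.univ.filter (fun i : Fin n => i < σ.1 i) with hs
    have hdisj : Disjoint s (s.image σ.1) := by
      rw [Finset.disjoint_left]
      intro i his hiimg
      obtain ⟨j, hjs, hji⟩ := Finset.mem_image.mp hiimg
      have hj : j < σ.1 j := (Finset.mem_filter.mp hjs).2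
      have hi : i < σ.1 i := (Finset.mem_filter.mp his).2
      have hσi : σ.1 i = j := by rw [← hji, hinv]
      have hij : i < j := by rw [← hσi]; exact hi
      have hji' : j < i := by rw [← hji]; exact hj
      exact lt_asymm hji' hij
    have hcard : (s ∪ s.image σ.1).card = s.card + s.card := by
      rw [Finset.card_union_of_disjoint hdisj,
        Finset.card_image_of_injective _ σ.1.injective]
    have hle : (s ∪ s.image σ.1).card ≤ n := by
      have := Finset.card_le_card (Finset.subset_univ (s ∪ s.image σ.1))
      simpa using this
    rw [hcard] at hle
    rw [hm, Nat.le_div_iff_mul_le (by norm_num)]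
    omega
  have hmn : m ≤ Fintype.card (Fin n) := by
    simp only [Fintype.card_fin, hm]
    exact Nat.div_le_self n 2
  choose S hS hcard using fun σ : {x : Equiv.Perm (Fin n) // x^2 = 1} =>
    Finset.exists_superset_card_eq (hsupp σ) hmn
  set G : {x : Equiv.Perm (Fin n) // x^2 = 1} →
      {S : Finset (Fin n) // S.card = m} × (Fin m → Fin n) :=
    fun σ => (⟨S σ, hcard σ⟩, fun k => σ.1 ((S σ).orderIsoOfFin (hcard σ) k)) with hG
  have hGinj : Function.Injective G := by
    intro σ τ h
    rw [hG, Prod.mk.injEq, Subtype.mk.injEq] at h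
    obtain ⟨hSeq, hgeq⟩ := h
    have hpt : ∀ i (hi : i ∈ S σ), σ.1 i = τ.1 i := by
      intro i hi
      set k := ((S σ).orderIsoOfFin (hcard σ)).symm ⟨i, hi⟩ with hk
      have hik : ((S σ).orderIsoOfFin (hcard σ) k : Fin n) = i := by
        rw [hk, OrderIso.apply_symm_apply]
      have h1 : σ.1 ((S σ).orderIsoOfFin (hcard σ) k) =
          τ.1 ((S τ).orderIsoOfFin (hcard τ) k) := congrFun hgeq k
      rw [hik, ← orderIsoOfFin_congr hSeq (hcard σ) (hcard τ) k, hik] at h1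
      exact h1
    apply Subtype.ext
    apply Equiv.ext
    intro i
    by_cases hi : i ∈ S σ
    · exact hpt i hi
    · have hσi : ¬ i < σ.1 i := fun hlt =>
        hi (hS σ (Finset.mem_filter.mpr ⟨Finset.mem_univ _, hlt⟩))
      have hτi : ¬ i < τ.1 i := fun hlt =>
        hi (hSeq ▸ hS τ (Finset.mem_filter.mpr ⟨Finset.mem_univ _, hlt⟩))
      rcases lt_or_eq_of_le (not_lt.mp hσi) with hσlt | hσeq
      · -- σ i < i : then j := σ i is in the support of σ
        have hjmem : σ.1 i ∈ S σ := by
          apply hS σ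
          refine Finset.mem_filter.mpr ⟨Finset.mem_univ _, ?_⟩
          rw [hinv]
          exact hσlt
        have hτj : τ.1 (σ.1 i) = i := by rw [← hpt _ hjmem, hinv]
        calc σ.1 i = τ.1 (τ.1 (σ.1 i)) := (hinv τ _).symm
          _ = τ.1 i := by rw [hτj]
      · rcases lt_or_eq_of_le (not_lt.mp hτi) with hτlt | hτeq
        · exfalso
          have hjmem : τ.1 i ∈ S σ := by
            rw [hSeq]
            apply hS τ
            refine Finset.mem_filter.mpr ⟨Finset.mem_univ _, ?_⟩
            rw [hinv]
            exact hτlt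
          have hσj : σ.1 (τ.1 i) = i := by rw [hpt _ hjmem, hinv]
          have hcontr : τ.1 i = i := by
            calc τ.1 i = σ.1 (σ.1 (τ.1 i)) := (hinv σ _).symm
              _ = σ.1 i := by rw [hσj]
              _ = i := hσeq
          exact absurd hcontr (ne_of_lt hτlt)
        · rw [hσeq, hτeq]
  have hfin : Finite ({S : Finset (Fin n) // S.card = m} × (Fin m → Fin n)) := by infer_instance
  calc Nat.card {x : Equiv.Perm (Fin n) // x^2 = 1}
      ≤ Nat.card ({S : Finset (Fin n) // S.card = m} × (Fin m → Fin n)) :=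
        Nat.card_le_card_of_injective G hGinj
    _ = Nat.card {S : Finset (Fin n) // S.card = m} * Nat.card (Fin m → Fin n) :=
        Nat.card_prod _ _
    _ ≤ 2^n * n^m := by
        refine Nat.mul_le_mul ?_ ?_
        · calc Nat.card {S : Finset (Fin n) // S.card = m}
              ≤ Nat.card (Finset (Fin n)) :=
                Nat.card_le_card_of_injective _ Subtype.val_injective
            _ = 2^n := by
                rw [Nat.card_eq_fintype_card, Fintype.card_finset, Fintype.card_fin]
        · rw [Nat.card_eq_fintype_card, Fintype.card_fun]
          simp


lemma ker_ge_alternating {n : ℕ} (hn : 5 ≤ n) (φ : Equiv.Perm (Fin n) →* Equiv.Perm (Fin n))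
    (hφ : ¬ Function.Bijective ⇑φ) : alternatingGroup (Fin n) ≤ φ.ker := by
  have hinj : ¬ Function.Injective ⇑φ := fun h => hφ (Finite.injective_iff_bijective.mp h)
  have hker : φ.ker ≠ ⊥ := fun h => hinj ((MonoidHom.ker_eq_bot_iff φ).mp h)
  exact normal_ge_alternating hn φ.ker hker

noncomputable instance homFinite (n : ℕ) : Finite (Equiv.Perm (Fin n) →* Equiv.Perm (Fin n)) :=
  Finite.of_injective (fun φ => ⇑φ) DFunLike.coe_injective

lemma nonbij_card_le {n : ℕ} (hn : 5 ≤ n) :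
    Nat.card {φ : Equiv.Perm (Fin n) →* Equiv.Perm (Fin n) // ¬ Function.Bijective ⇑φ}
      ≤ Nat.card {x : Equiv.Perm (Fin n) // x^2 = 1} := by
  classical
  set u : Fin n := ⟨0, by omega⟩ with hu
  set v : Fin n := ⟨1, by omega⟩ with hv
  have huv : u ≠ v := by simp [hu, hv, Fin.ext_iff]
  set F : {φ : Equiv.Perm (Fin n) →* Equiv.Perm (Fin n) // ¬ Function.Bijective ⇑φ}
      → {x : Equiv.Perm (Fin n) // x^2 = 1} :=
    fun φ => ⟨φ.1 (Equiv.swap u v), by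
      rw [← map_pow, sq, Equiv.swap_mul_self, map_one]⟩ with hF
  refine Nat.card_le_card_of_injective F ?_
  intro φ ψ h
  rw [hF, Subtype.mk.injEq] at h
  have hkφ := ker_ge_alternating hn φ.1 φ.2
  have hkψ := ker_ge_alternating hn ψ.1 ψ.2
  apply Subtype.ext
  refine MonoidHom.ext fun g => ?_
  by_cases hg : g ∈ alternatingGroup (Fin n)
  · rw [MonoidHom.mem_ker.mp (hkφ hg), MonoidHom.mem_ker.mp (hkψ hg)]
  · have hsg : Equiv.Perm.sign g = -1 := by
      rcases Int.units_eq_one_or (Equiv.Perm.sign g) with h' | h'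
      · exact absurd (Equiv.Perm.mem_alternatingGroup.mpr h') hg
      · exact h'
    have hwmem : Equiv.swap u v * g ∈ alternatingGroup (Fin n) := by
      rw [Equiv.Perm.mem_alternatingGroup, map_mul, Equiv.Perm.sign_swap huv, hsg]
      norm_num
    have hφw := MonoidHom.mem_ker.mp (hkφ hwmem)
    have hψw := MonoidHom.mem_ker.mp (hkψ hwmem)
    calc φ.1 g = φ.1 (Equiv.swap u v * (Equiv.swap u v * g)) := by
          rw [Equiv.swap_mul_self_mul]
      _ = φ.1 (Equiv.swap u v) * φ.1 (Equiv.swap u v * g) := map_mul _ _ _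
      _ = ψ.1 (Equiv.swap u v) * 1 := by rw [h, hφw]
      _ = ψ.1 (Equiv.swap u v) * ψ.1 (Equiv.swap u v * g) := by rw [hψw]
      _ = ψ.1 (Equiv.swap u v * (Equiv.swap u v * g)) := (map_mul _ _ _).symm
      _ = ψ.1 g := by rw [Equiv.swap_mul_self_mul]

lemma bij_card_ge {n : ℕ} (hn : 5 ≤ n) :
    n.factorial ≤
      Nat.card {φ : Equiv.Perm (Fin n) →* Equiv.Perm (Fin n) // Function.Bijective ⇑φ} := by
  classical
  have hcomm : ∀ y : Equiv.Perm (Fin n), (∀ x, y * x * y⁻¹ = x) → y = 1 := by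
    intro y hy
    by_contra hy1
    obtain ⟨a, ha⟩ : ∃ a, y a ≠ a := by
      by_contra h
      push_neg at h
      exact hy1 (Equiv.ext h)
    obtain ⟨c, hc⟩ : ∃ c, c ∉ ({a, y a} : Finset (Fin n)) := by
      by_contra h
      push_neg at h
      have hsub : (Finset.univ : Finset (Fin n)) ⊆ {a, y a} := fun x _ => h x
      have h1 := Finset.card_le_card hsub
      have h2 : ({a, y a} : Finset (Fin n)).card ≤ 2 :=
        (Finset.card_insert_le _ _).trans (by simp)
      simp only [Finset.card_univ, Fintype.card_fin] at h1
      omega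
    simp only [Finset.mem_insert, Finset.mem_singleton, not_or] at hc
    obtain ⟨hca, hcb⟩ := hc
    have h1 : Equiv.swap (y a) (y c) = Equiv.swap a c := by
      rw [swap_apply_apply, hy]
    have h2 := congrArg (fun p : Equiv.Perm (Fin n) => p (y a)) h1
    simp only [Equiv.swap_apply_left] at h2
    -- h2 : y c = swap a c (y a)
    have hya_ne_a : y a ≠ a := ha
    have hya_ne_c : y a ≠ c := fun h => hcb h.symm
    rw [Equiv.swap_apply_of_ne_of_ne hya_ne_a hya_ne_c] at h2
    exact hca (y.injective h2)
  set C : Equiv.Perm (Fin n) →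
      {φ : Equiv.Perm (Fin n) →* Equiv.Perm (Fin n) // Function.Bijective ⇑φ} :=
    fun g => ⟨(MulAut.conj g).toMonoidHom, (MulAut.conj g).bijective⟩ with hC
  have hCinj : Function.Injective C := by
    intro g h hgh
    rw [hC] at hgh; replace hgh := congrArg Subtype.val hgh
    have hx : ∀ x, g * x * g⁻¹ = h * x * h⁻¹ := by
      intro x
      have := congrArg (fun ψ : Equiv.Perm (Fin n) →* Equiv.Perm (Fin n) => ψ x) hgh
      simpa [MulAut.conj_apply] using this
    have : ∀ x, (h⁻¹ * g) * x * (h⁻¹ * g)⁻¹ = x := by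
      intro x
      have h1 := hx x
      group
      group at h1
      calc h⁻¹ * g * x * g⁻¹ * h = h⁻¹ * (g * x * g⁻¹) * h := by group
        _ = h⁻¹ * (h * x * h⁻¹) * h := by rw [hx x]
        _ = x := by group
    have := hcomm _ this
    have : h⁻¹ * g = 1 := this
    calc g = h * (h⁻¹ * g) := by group
      _ = h := by rw [this]; group
  calc n.factorial = Nat.card (Equiv.Perm (Fin n)) := by
        rw [Nat.card_eq_fintype_card, Fintype.card_perm, Fintype.card_fin]
    _ ≤ _ := Nat.card_le_card_of_injective C hCinj

lemma card_split (n : ℕ) :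
    Nat.card (Equiv.Perm (Fin n) →* Equiv.Perm (Fin n)) =
      Nat.card {φ : Equiv.Perm (Fin n) →* Equiv.Perm (Fin n) // Function.Bijective ⇑φ} +
      Nat.card {φ : Equiv.Perm (Fin n) →* Equiv.Perm (Fin n) // ¬ Function.Bijective ⇑φ} := by
  classical
  letI : Fintype (Equiv.Perm (Fin n) →* Equiv.Perm (Fin n)) := Fintype.ofFinite _
  simp only [Nat.card_eq_fintype_card]
  rw [Fintype.card_subtype_compl]
  have := Fintype.card_subtype_le (α := Equiv.Perm (Fin n) →* Equiv.Perm (Fin n))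
    (fun φ => Function.Bijective ⇑φ)
  omega

theorem symmetric_group_automorphism_proportion :
    Filter.Tendsto (fun n : ℕ =>
      (Nat.card {φ : Equiv.Perm (Fin n) →* Equiv.Perm (Fin n) // Function.Bijective ⇑φ} : ℝ) /
        (Nat.card (Equiv.Perm (Fin n) →* Equiv.Perm (Fin n)) : ℝ))
      Filter.atTop (nhds 1) := by
  have hlow : Filter.Tendsto (fun n : ℕ => 1 - (2/3:ℝ)^n) Filter.atTop (nhds 1) := by
    have h0 : Filter.Tendsto (fun n : ℕ => (2/3:ℝ)^n) Filter.atTop (nhds 0) :=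
      tendsto_pow_atTop_nhds_zero_of_lt_one (by norm_num) (by norm_num)
    have := Filter.Tendsto.sub (tendsto_const_nhds (x := (1:ℝ))) h0
    simpa using this
  refine tendsto_of_tendsto_of_tendsto_of_le_of_le' hlow tendsto_const_nhds ?_ (Filter.Eventually.of_forall ?_)
  · -- lower bound eventually
    filter_upwards [Filter.eventually_ge_atTop 67] with n hn
    have hn5 : 5 ≤ n := by omega
    set B := Nat.card {φ : Equiv.Perm (Fin n) →* Equiv.Perm (Fin n) // Function.Bijective ⇑φ}
      with hBdef
    set K := Nat.card {φ : Equiv.Perm (Fin n) →* Equiv.Perm (Fin n) // ¬ Function.Bijective ⇑φ}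
      with hKdef
    set E := Nat.card (Equiv.Perm (Fin n) →* Equiv.Perm (Fin n)) with hEdef
    have hsplit : E = B + K := card_split n
    have hKle : K ≤ 2^n * n^(n/2) :=
      le_trans (nonbij_card_le hn5) (involution_card_le n)
    have hfac : 3^n * n^(n/2) ≤ Nat.factorial n := three_pow_mul_le_factorial n hn
    have hBge : Nat.factorial n ≤ B := bij_card_ge hn5
    -- to the reals
    have hBpos : 0 < (B:ℝ) := by
      have : 0 < Nat.factorial n := Nat.factorial_pos n
      have : 0 < B := lt_of_lt_of_le this hBge
      exact_mod_cast this
    have hEB : (E:ℝ) = (B:ℝ) + (K:ℝ) := by exact_mod_cast congrArg (Nat.cast : ℕ → ℝ) hsplit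
    have hEpos : 0 < (E:ℝ) := by
      rw [hEB]
      have : (0:ℝ) ≤ K := Nat.cast_nonneg K
      linarith
    have hKR : (K:ℝ) ≤ (2/3:ℝ)^n * E := by
      have h1 : (K:ℝ) ≤ (2:ℝ)^n * (n:ℝ)^(n/2) := by exact_mod_cast hKle
      have h2 : (3:ℝ)^n * (n:ℝ)^(n/2) ≤ (Nat.factorial n : ℝ) := by exact_mod_cast hfac
      have h3 : (Nat.factorial n : ℝ) ≤ (B:ℝ) := by exact_mod_cast hBge
      have h4 : (B:ℝ) ≤ (E:ℝ) := by
        rw [hEB]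
        have : (0:ℝ) ≤ K := Nat.cast_nonneg K
        linarith
      have h23 : (2:ℝ)^n * (n:ℝ)^(n/2) = (2/3:ℝ)^n * ((3:ℝ)^n * (n:ℝ)^(n/2)) := by
        rw [div_pow, ← mul_assoc, div_mul_eq_mul_div, mul_div_assoc, div_self (by positivity)]
        ring
      calc (K:ℝ) ≤ (2:ℝ)^n * (n:ℝ)^(n/2) := h1
        _ = (2/3:ℝ)^n * ((3:ℝ)^n * (n:ℝ)^(n/2)) := h23
        _ ≤ (2/3:ℝ)^n * (E:ℝ) := by
            refine mul_le_mul_of_nonneg_left ?_ (by positivity)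
            linarith
    -- conclude
    have hdiv : (K:ℝ) / (E:ℝ) ≤ (2/3:ℝ)^n := by
      rw [div_le_iff₀ hEpos]
      exact hKR
    have : (B:ℝ) / (E:ℝ) = 1 - (K:ℝ)/(E:ℝ) := by
      field_simp
      linarith [hEB]
    rw [this]
    linarith
  · -- upper bound : ratio ≤ 1 for all n
    intro n
    by_cases hE : Nat.card (Equiv.Perm (Fin n) →* Equiv.Perm (Fin n)) = 0
    · simp [hE]
    · have hEpos : 0 < (Nat.card (Equiv.Perm (Fin n) →* Equiv.Perm (Fin n)) : ℝ) := by
        have : 0 < Nat.card (Equiv.Perm (Fin n) →* Equiv.Perm (Fin n)) := Nat.pos_of_ne_zero hE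
        exact_mod_cast this
      rw [div_le_one hEpos]
      have := Nat.card_le_card_of_injective
        (Subtype.val : {φ : Equiv.Perm (Fin n) →* Equiv.Perm (Fin n) // Function.Bijective ⇑φ}
          → (Equiv.Perm (Fin n) →* Equiv.Perm (Fin n))) Subtype.val_injective
      exact_mod_cast this
end

section
/- The expected image-order of a random endomorphism of the symmetric group on n letters is asymptotic to n!: the sequence n ↦ ( Σ over all φ : Equiv.Perm (Fin n) →* Equiv.Perm (Fin n) of (Nat.card φ.range : ℝ) ) / ( (Nat.card (Equiv.Perm (Fin n) →* Equiv.Perm (Fin n))) · n! ) tends to 1 as n → ∞ (Filter.Tendsto along atTop to nhds 1). -/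
open Equiv Equiv.Perm Finset Filter

lemma perm_sq_one_of_apply {α : Type*} (e : Perm α) (h : ∀ x, e (e x) = x) : e ^ 2 = 1 := by
  have : e * e = 1 := Equiv.ext fun x => h x
  rwa [sq]

lemma perm_apply_of_sq_one {α : Type*} {e : Perm α} (h : e ^ 2 = 1) (x : α) : e (e x) = x := by
  have := congrFun (congrArg (⇑) h) x
  simpa [sq, Equiv.Perm.mul_apply] using this

lemma aux_e_sq {n : ℕ} (σ : Perm (Fin (n+1))) (hσ : σ ^ 2 = 1) :
    (Equiv.Perm.decomposeFin σ).2 ^ 2 = 1 := by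
  set p := (Equiv.Perm.decomposeFin σ).1 with hp
  set e := (Equiv.Perm.decomposeFin σ).2 with he
  have hσe : σ = Equiv.Perm.decomposeFin.symm (p, e) := by rw [hp, he]; simp
  have hinv : ∀ x : Fin (n+1), σ (σ x) = x := perm_apply_of_sq_one hσ
  apply perm_sq_one_of_apply
  by_cases hp0 : p = 0
  · have key : ∀ x : Fin n, σ x.succ = (e x).succ := by
      intro x; rw [hσe, Equiv.Perm.decomposeFin_symm_apply_succ, hp0, Equiv.swap_self]; rfl
    intro x
    have h1 := hinv x.succ
    rw [key x, key (e x)] at h1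
    exact Fin.succ_injective _ h1
  · obtain ⟨q, hq⟩ := Fin.eq_succ_of_ne_zero hp0
    have hσ0 : σ 0 = p := by rw [hσe]; simp
    have hσsucc : ∀ x : Fin n, σ x.succ = Equiv.swap 0 p ((e x).succ) := by
      intro x; rw [hσe]; simp
    have heq : e q = q := by
      have h1 : σ p = 0 := by rw [← hσ0]; exact hinv 0
      have h2 : Equiv.swap (0 : Fin (n+1)) p ((e q).succ) = 0 := by
        rw [← hσsucc, ← hq]; exact h1
      have h3 : (e q).succ = p := by
        by_contra hne
        rw [Equiv.swap_apply_of_ne_of_ne (Fin.succ_ne_zero _) hne] at h2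
        exact Fin.succ_ne_zero _ h2
      rw [hq] at h3
      exact Fin.succ_injective _ h3
    intro x
    by_cases hx : e x = q
    · have hxq : x = q := e.injective (by rw [hx, heq])
      rw [hx, heq, hxq]
    · have hexne0 : (e x).succ ≠ 0 := Fin.succ_ne_zero _
      have hexnep : (e x).succ ≠ p := by rw [hq]; exact fun h => hx (Fin.succ_injective _ h)
      have h1 : σ x.succ = (e x).succ := by
        rw [hσsucc, Equiv.swap_apply_of_ne_of_ne hexne0 hexnep]
      have h2 : σ ((e x).succ) = x.succ := by rw [← h1]; exact hinv x.succ
      rw [hσsucc] at h2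
      have hxne0 : (x.succ : Fin (n+1)) ≠ 0 := Fin.succ_ne_zero _
      have hxnep : (x.succ : Fin (n+1)) ≠ p := by
        rw [hq]; intro h
        exact hx (by rw [Fin.succ_injective _ h, heq])
      have h3 : (e (e x)).succ = Equiv.swap (0 : Fin (n+1)) p x.succ := by
        rw [← h2, Equiv.swap_apply_self]
      rw [Equiv.swap_apply_of_ne_of_ne hxne0 hxnep] at h3
      exact Fin.succ_injective _ h3

lemma aux_e_fix {n : ℕ} (σ : Perm (Fin (n+1))) (hσ : σ ^ 2 = 1) (q : Fin n)
    (hq : (Equiv.Perm.decomposeFin σ).1 = q.succ) :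
    (Equiv.Perm.decomposeFin σ).2 q = q := by
  set p := (Equiv.Perm.decomposeFin σ).1 with hp
  set e := (Equiv.Perm.decomposeFin σ).2 with he
  have hσe : σ = Equiv.Perm.decomposeFin.symm (p, e) := by rw [hp, he]; simp
  have hinv : ∀ x : Fin (n+1), σ (σ x) = x := perm_apply_of_sq_one hσ
  have hσ0 : σ 0 = p := by rw [hσe]; simp
  have hσsucc : ∀ x : Fin n, σ x.succ = Equiv.swap 0 p ((e x).succ) := by
    intro x; rw [hσe]; simp
  have h1 : σ p = 0 := by rw [← hσ0]; exact hinv 0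
  have h2 : Equiv.swap (0 : Fin (n+1)) p ((e q).succ) = 0 := by
    rw [← hσsucc, ← hq]; exact h1
  have h3 : (e q).succ = p := by
    by_contra hne
    rw [Equiv.swap_apply_of_ne_of_ne (Fin.succ_ne_zero _) hne] at h2
    exact Fin.succ_ne_zero _ h2
  rw [hq] at h3
  exact Fin.succ_injective _ h3

def T (n : ℕ) : ℕ := Fintype.card {σ : Perm (Fin n) // σ ^ 2 = 1}

lemma decomposeFin_fst {n : ℕ} (σ : Perm (Fin (n+1))) :
    (Equiv.Perm.decomposeFin σ).1 = σ 0 := by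
  conv_rhs => rw [← Equiv.symm_apply_apply Equiv.Perm.decomposeFin σ]
  exact (Equiv.Perm.decomposeFin_symm_apply_zero _ _).symm

lemma conj_swap_sq {n : ℕ} (e : Perm (Fin (n+1))) (he : e ^ 2 = 1) (q : Fin (n+1)) :
    (Equiv.swap 0 q * e * Equiv.swap 0 q) ^ 2 = 1 := by
  rw [sq] at he ⊢
  have h1 : e * (e * Equiv.swap 0 q) = Equiv.swap 0 q := by
    rw [← mul_assoc, he, one_mul]
  calc Equiv.swap 0 q * e * Equiv.swap 0 q * (Equiv.swap 0 q * e * Equiv.swap 0 q)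
      = Equiv.swap 0 q * (e * (Equiv.swap 0 q * (Equiv.swap 0 q * (e * Equiv.swap 0 q)))) := by
        simp only [mul_assoc]
    _ = Equiv.swap 0 q * (e * (e * Equiv.swap 0 q)) := by rw [Equiv.swap_mul_self_mul]
    _ = Equiv.swap 0 q * Equiv.swap 0 q := by rw [h1]
    _ = 1 := Equiv.swap_mul_self _ _

noncomputable def invF {n : ℕ} (σ : {σ : Perm (Fin (n+2)) // σ ^ 2 = 1}) :
    {σ : Perm (Fin (n+1)) // σ ^ 2 = 1} ⊕ (Fin (n+1) × {σ : Perm (Fin n) // σ ^ 2 = 1}) :=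
  if h : (Equiv.Perm.decomposeFin σ.1).1 = 0 then
    Sum.inl ⟨(Equiv.Perm.decomposeFin σ.1).2, aux_e_sq σ.1 σ.2⟩
  else
    let q := (Equiv.Perm.decomposeFin σ.1).1.pred h
    let e := (Equiv.Perm.decomposeFin σ.1).2
    Sum.inr (q, ⟨(Equiv.Perm.decomposeFin (Equiv.swap 0 q * e * Equiv.swap 0 q)).2,
      aux_e_sq _ (conj_swap_sq e (aux_e_sq σ.1 σ.2) q)⟩)

set_option maxHeartbeats 1000000 in
lemma invF_injective {n : ℕ} : Function.Injective (@invF n) := by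
  intro σ τ h
  unfold invF at h
  by_cases hσ0 : (Equiv.Perm.decomposeFin σ.1).1 = 0 <;>
    by_cases hτ0 : (Equiv.Perm.decomposeFin τ.1).1 = 0 <;>
      simp only [hσ0, hτ0, dif_pos, dif_neg, not_false_iff, dite_true, dite_false] at h
  · have he : (Equiv.Perm.decomposeFin σ.1).2 = (Equiv.Perm.decomposeFin τ.1).2 := by
      simpa using h
    have : Equiv.Perm.decomposeFin σ.1 = Equiv.Perm.decomposeFin τ.1 :=
      Prod.ext (hσ0.trans hτ0.symm) he
    exact Subtype.ext (Equiv.Perm.decomposeFin.injective this)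
  · exact absurd h (by simp)
  · exact absurd h (by simp)
  · simp only [Sum.inr.injEq, Prod.mk.injEq, Subtype.mk.injEq] at h
    obtain ⟨hq, hf⟩ := h
    set qσ := (Equiv.Perm.decomposeFin σ.1).1.pred hσ0 with hqσ
    set qτ := (Equiv.Perm.decomposeFin τ.1).1.pred hτ0 with hqτ
    set eσ := (Equiv.Perm.decomposeFin σ.1).2 with heσ
    set eτ := (Equiv.Perm.decomposeFin τ.1).2 with heτ
    set cσ := Equiv.swap 0 qσ * eσ * Equiv.swap 0 qσ with hcσ
    set cτ := Equiv.swap 0 qτ * eτ * Equiv.swap 0 qτ with hcτ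
    have hfixσ : eσ qσ = qσ := aux_e_fix σ.1 σ.2 qσ (by simp [hqσ])
    have hfixτ : eτ qτ = qτ := aux_e_fix τ.1 τ.2 qτ (by simp [hqτ])
    have hcσ0 : cσ 0 = 0 := by
      simp [hcσ, Equiv.Perm.mul_apply, Equiv.swap_apply_left, hfixσ]
    have hcτ0 : cτ 0 = 0 := by
      simp [hcτ, Equiv.Perm.mul_apply, Equiv.swap_apply_left, hfixτ]
    have hceq : cσ = cτ := by
      have h1 : Equiv.Perm.decomposeFin cσ = Equiv.Perm.decomposeFin cτ :=
        Prod.ext (by rw [decomposeFin_fst, decomposeFin_fst, hcσ0, hcτ0]) hf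
      exact Equiv.Perm.decomposeFin.injective h1
    have h2 : Equiv.swap 0 qτ * eσ * Equiv.swap 0 qτ = Equiv.swap 0 qτ * eτ * Equiv.swap 0 qτ := by
      rw [← hq]; rw [hcσ, hcτ, ← hq] at hceq; exact hceq
    have heq2 : eσ = eτ := mul_left_cancel (mul_right_cancel h2)
    have hp : (Equiv.Perm.decomposeFin σ.1).1 = (Equiv.Perm.decomposeFin τ.1).1 := by
      rw [← Fin.succ_pred _ hσ0, ← Fin.succ_pred _ hτ0]
      exact congrArg Fin.succ hq
    exact Subtype.ext (Equiv.Perm.decomposeFin.injective (Prod.ext hp heq2))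

set_option maxHeartbeats 2000000 in
lemma T_rec (n : ℕ) : T (n+2) ≤ T (n+1) + (n+1) * T n := by
  have h := Fintype.card_le_of_injective _ (@invF_injective n)
  simpa [T, Fintype.card_sum, Fintype.card_prod, Fintype.card_fin] using h

lemma T_le : ∀ n : ℕ, 1 ≤ n → T (n+1) ≤ 3 * n.factorial := by
  intro n
  induction n using Nat.strong_induction_on with
  | _ n ih =>
    match n with
    | 0 => intro h; omega
    | 1 => intro _; show T 2 ≤ 3; have : T 2 = 2 := by unfold T; decide
           omega
    | 2 => intro _; show T 3 ≤ 6; have : T 3 = 4 := by unfold T; decide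
           omega
    | (m+3) =>
      intro _
      have h1 := ih (m+2) (by omega) (by omega)
      have h2 := ih (m+1) (by omega) (by omega)
      have h3 := T_rec (m+2)
      have key : 3 * (m+2).factorial + (m+3) * (3 * (m+1).factorial) ≤ 3 * (m+3).factorial := by
        rw [Nat.factorial_succ (m+2), Nat.factorial_succ (m+1)]
        ring_nf
        nlinarith [Nat.factorial_pos (m+1), (m+1).factorial_pos]
      calc T (m+3+1) ≤ T (m+3) + (m+3) * T (m+2) := T_rec (m+2)
        _ ≤ 3 * (m+2).factorial + (m+3) * (3 * (m+1).factorial) := by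
            exact Nat.add_le_add h1 (Nat.mul_le_mul_left _ h2)
        _ ≤ 3 * (m+3).factorial := key

lemma exists_notin_finset {n : ℕ} (s : Finset (Fin n)) (h : s.card < n) : ∃ t, t ∉ s := by
  by_contra hc
  push_neg at hc
  have : (Finset.univ : Finset (Fin n)).card ≤ s.card :=
    Finset.card_le_card (fun x _ => hc x)
  simp [Finset.card_univ] at this
  omega

lemma conj_mem_of_mem {G : Type*} [Group G] (N : Subgroup G) [hN : N.Normal]
    {x : G} (hx : x ∈ N) (g : G) : g * x * g⁻¹ ∈ N := hN.conj_mem x hx g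

lemma normal_contains_alternating {n : ℕ} (hn : 5 ≤ n) (N : Subgroup (Perm (Fin n)))
    [hNn : N.Normal] (hN : N ≠ ⊥) : alternatingGroup (Fin n) ≤ N := by
  classical
  -- get a three-cycle in N
  obtain ⟨⟨σ, hσN⟩, hσ1⟩ := Subgroup.ne_bot_iff_exists_ne_one.mp hN
  have hσne : σ ≠ 1 := by simpa [Subtype.ext_iff] using hσ1
  have hb : ∃ b, σ b ≠ b := by
    by_contra hc
    push_neg at hc
    exact hσne (Equiv.ext fun x => hc x)
  obtain ⟨b, hbb⟩ := hb
  obtain ⟨c, hc⟩ := exists_notin_finset ({b, σ b} : Finset (Fin n))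
    (lt_of_le_of_lt (Finset.card_insert_le _ _) (by simp; omega))
  simp only [Finset.mem_insert, Finset.mem_singleton, not_or] at hc
  obtain ⟨hcb, hcσb⟩ := hc
  have hbc : b ≠ c := fun h => hcb h.symm
  have hσbc : σ b ≠ c := fun h => hcσb h.symm
  -- commutator
  have hπN : Equiv.swap (σ b) (σ c) * Equiv.swap b c ∈ N := by
    have h1 : Equiv.swap (σ b) (σ c) = σ * Equiv.swap b c * σ⁻¹ :=
      Equiv.swap_apply_apply σ b c
    have h2 : σ * (Equiv.swap b c * σ⁻¹ * (Equiv.swap b c)⁻¹) ∈ N :=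
      N.mul_mem hσN (conj_mem_of_mem N (N.inv_mem hσN) (Equiv.swap b c))
    have h3 : Equiv.swap (σ b) (σ c) * Equiv.swap b c
        = σ * (Equiv.swap b c * σ⁻¹ * (Equiv.swap b c)⁻¹) := by
      rw [h1, Equiv.swap_inv]
      simp only [mul_assoc]
    rwa [h3]
  have hσbσc : σ b ≠ σ c := fun h => hbc (σ.injective h)
  have key : ∃ γ ∈ N, IsThreeCycle γ := by
    by_cases h1 : σ c = c
    · refine ⟨_, hπN, ?_⟩
      rw [h1, Equiv.swap_comm (σ b) c, Equiv.swap_comm b c]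
      exact isThreeCycle_swap_mul_swap_same hcσb hcb hbb
    · by_cases h2 : σ c = b
      · refine ⟨_, hπN, ?_⟩
        rw [h2, Equiv.swap_comm (σ b) b]
        exact isThreeCycle_swap_mul_swap_same (Ne.symm hbb) hbc hσbc
      · -- disjoint case
        set x := σ b; set y := σ c
        have hyz : y ≠ b := h2
        have hyw : y ≠ c := h1
        obtain ⟨t, ht⟩ := exists_notin_finset ({x, y, b, c} : Finset (Fin n))
          (lt_of_le_of_lt (Finset.card_le_card (Finset.Subset.refl _) |>.trans
            (by
              have : ({x, y, b, c} : Finset (Fin n)).card ≤ 4 := by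
                apply le_trans (Finset.card_insert_le _ _)
                apply Nat.succ_le_succ
                apply le_trans (Finset.card_insert_le _ _)
                apply Nat.succ_le_succ
                exact Finset.card_insert_le _ _
              exact this)) (by omega))
        simp only [Finset.mem_insert, Finset.mem_singleton, not_or] at ht
        obtain ⟨htx, hty, htb, htc⟩ := ht
        -- ρ = conj of π by swap b t
        have hρN : Equiv.swap b t * (Equiv.swap x y * Equiv.swap b c) * (Equiv.swap b t)⁻¹ ∈ N :=
      conj_mem_of_mem N hπN _
        have hρ : Equiv.swap b t * (Equiv.swap x y * Equiv.swap b c) * (Equiv.swap b t)⁻¹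
            = Equiv.swap x y * Equiv.swap t c := by
          have e1 : Equiv.swap b t * Equiv.swap x y * (Equiv.swap b t)⁻¹
              = Equiv.swap (Equiv.swap b t x) (Equiv.swap b t y) :=
            (Equiv.swap_apply_apply (Equiv.swap b t) x y).symm
          have e2 : Equiv.swap b t * Equiv.swap b c * (Equiv.swap b t)⁻¹
              = Equiv.swap (Equiv.swap b t b) (Equiv.swap b t c) :=
            (Equiv.swap_apply_apply (Equiv.swap b t) b c).symm
          have hx1 : Equiv.swap b t x = x :=
            Equiv.swap_apply_of_ne_of_ne hbb (Ne.symm htx)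
          have hy1 : Equiv.swap b t y = y :=
            Equiv.swap_apply_of_ne_of_ne hyz (Ne.symm hty)
          have hb1 : Equiv.swap b t b = t := Equiv.swap_apply_left _ _
          have hc1 : Equiv.swap b t c = c :=
            Equiv.swap_apply_of_ne_of_ne (Ne.symm hbc) (Ne.symm htc)
          calc Equiv.swap b t * (Equiv.swap x y * Equiv.swap b c) * (Equiv.swap b t)⁻¹
              = (Equiv.swap b t * Equiv.swap x y * (Equiv.swap b t)⁻¹)
                * (Equiv.swap b t * Equiv.swap b c * (Equiv.swap b t)⁻¹) := by
                simp only [mul_assoc, Equiv.swap_inv, Equiv.swap_mul_self_mul]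
            _ = Equiv.swap x y * Equiv.swap t c := by rw [e1, e2, hx1, hy1, hb1, hc1]
        rw [hρ] at hρN
        have hγN : (Equiv.swap x y * Equiv.swap b c)⁻¹ * (Equiv.swap x y * Equiv.swap t c) ∈ N :=
          N.mul_mem (N.inv_mem hπN) hρN
        have hγ : (Equiv.swap x y * Equiv.swap b c)⁻¹ * (Equiv.swap x y * Equiv.swap t c)
            = Equiv.swap c b * Equiv.swap c t := by
          rw [mul_inv_rev, Equiv.swap_inv, Equiv.swap_inv]
          calc Equiv.swap b c * Equiv.swap x y * (Equiv.swap x y * Equiv.swap t c)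
              = Equiv.swap b c * (Equiv.swap x y * (Equiv.swap x y * Equiv.swap t c)) := by
                rw [mul_assoc]
            _ = Equiv.swap b c * Equiv.swap t c := by rw [Equiv.swap_mul_self_mul]
            _ = Equiv.swap c b * Equiv.swap c t := by
                rw [Equiv.swap_comm b c, Equiv.swap_comm t c]
        rw [hγ] at hγN
        refine ⟨_, hγN, isThreeCycle_swap_mul_swap_same hcb (fun h => htc h.symm) (fun h => htb h.symm)⟩
  obtain ⟨γ, hγN, hγ3⟩ := key
  rw [← Equiv.Perm.closure_three_cycles_eq_alternating]
  apply (Subgroup.closure_le N).mpr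
  intro δ hδ
  have hconj : IsConj γ δ :=
    Equiv.Perm.isConj_of_cycleType_eq (hγ3.trans hδ.symm)
  obtain ⟨g, hg⟩ := isConj_iff.mp hconj
  rw [← hg]
  exact conj_mem_of_mem N hγN g

section
variable {n : ℕ}
abbrev G (n : ℕ) := Equiv.Perm (Fin n)
abbrev E (n : ℕ) := G n →* G n

noncomputable instance : Fintype (E n) :=
  have : Finite (E n) := Finite.of_injective _ (DFunLike.coe_injective)
  Fintype.ofFinite _

lemma cardG (n : ℕ) : Nat.card (G n) = n.factorial := by
  simp [Nat.card_eq_fintype_card, Fintype.card_perm]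

lemma range_le (φ : E n) : Nat.card φ.range ≤ n.factorial := by
  rw [← cardG n]
  exact Nat.card_le_card_of_injective _ Subtype.val_injective

lemma range_eq_of_inj {φ : E n} (h : Function.Injective φ) :
    Nat.card φ.range = n.factorial := by
  rw [← cardG n]
  exact (Nat.card_congr (MonoidHom.ofInjective h).toEquiv).symm

lemma eq_one_of_comm (hn : 6 ≤ n) (z : G n) (hz : ∀ x, z * x = x * z) : z = 1 := by
  by_contra hne
  have hb : ∃ b, z b ≠ b := by
    by_contra hc; push_neg at hc; exact hne (Equiv.ext fun x => hc x)
  obtain ⟨b, hbb⟩ := hb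
  have : ∃ c, c ∉ ({b, z b} : Finset (Fin n)) := by
    by_contra hc; push_neg at hc
    have h1 : (Finset.univ : Finset (Fin n)).card ≤ ({b, z b} : Finset (Fin n)).card :=
      Finset.card_le_card (fun x _ => hc x)
    have h2 : ({b, z b} : Finset (Fin n)).card ≤ 2 := Finset.card_insert_le _ _ |>.trans (by simp)
    simp [Finset.card_univ] at h1
    omega
  obtain ⟨c, hc⟩ := this
  simp only [Finset.mem_insert, Finset.mem_singleton, not_or] at hc
  obtain ⟨hcb, hczb⟩ := hc
  have h1 := congrFun (congrArg (⇑) (hz (Equiv.swap b c))) b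
  simp only [Equiv.Perm.mul_apply, Equiv.swap_apply_left] at h1
  rw [Equiv.swap_apply_of_ne_of_ne hbb (Ne.symm hczb)] at h1
  exact hcb (z.injective h1)
end

section
variable {n : ℕ}
open scoped Classical

lemma ker_ge_of_not_inj (hn : 6 ≤ n) {φ : E n} (h : ¬ Function.Injective φ) :
    alternatingGroup (Fin n) ≤ φ.ker :=
  normal_contains_alternating (by omega) _ (fun hc => h (φ.ker_eq_bot_iff.mp hc))

lemma A_ge (hn : 6 ≤ n) :
    n.factorial ≤ (univ.filter fun φ : E n => Function.Injective φ).card := by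
  have h1 : n.factorial = (univ : Finset (G n)).card := by
    simp [Finset.card_univ, Fintype.card_perm]
  rw [h1]
  apply Finset.card_le_card_of_injOn (fun g => (MulAut.conj g).toMonoidHom)
  · intro g _
    simp only [mem_filter, mem_univ, true_and]
    simp only [coe_filter, mem_univ, true_and, Set.mem_setOf_eq]
    rw [show ⇑((MulAut.conj g).toMonoidHom) = ⇑(MulAut.conj g) from rfl]
    exact (MulAut.conj g).injective
  · intro g _ h _ heq
    have hval : ∀ x, g * x * g⁻¹ = h * x * h⁻¹ := by
      intro x
      have := congrFun (congrArg (⇑) heq) x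
      simpa [MulAut.conj_apply] using this
    have key : ∀ x, (h⁻¹ * g) * x = x * (h⁻¹ * g) := by
      intro x
      calc (h⁻¹ * g) * x = h⁻¹ * (g * x * g⁻¹) * g := by simp [mul_assoc]
        _ = h⁻¹ * (h * x * h⁻¹) * g := by rw [hval]
        _ = x * (h⁻¹ * g) := by simp [mul_assoc]
    have := eq_one_of_comm hn _ key
    exact (inv_mul_eq_one.mp this).symm

lemma B_le (hn : 6 ≤ n) :
    (univ.filter fun φ : E n => ¬ Function.Injective φ).card ≤ T n := by
  set i0 : Fin n := ⟨0, by omega⟩ with hi0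
  set i1 : Fin n := ⟨1, by omega⟩ with hi1
  have hi : i0 ≠ i1 := by simp [hi0, hi1, Fin.ext_iff]
  set s : G n := Equiv.swap i0 i1 with hs
  have hsign : Equiv.Perm.sign s = -1 := Equiv.Perm.sign_swap hi
  have hT : T n = (univ.filter fun σ : G n => σ ^ 2 = 1).card := Fintype.card_subtype _
  rw [hT]
  apply Finset.card_le_card_of_injOn (fun φ : E n => φ s)
  · intro φ _
    simp only [mem_filter, mem_univ, true_and]
    simp only [coe_filter, mem_univ, true_and, Set.mem_setOf_eq]
    rw [← map_pow, sq, Equiv.swap_mul_self, map_one]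
  · intro φ hφ ψ hψ heq
    simp only [coe_filter, mem_univ, true_and, Set.mem_setOf_eq] at hφ hψ
    have kφ := ker_ge_of_not_inj hn hφ
    have kψ := ker_ge_of_not_inj hn hψ
    apply MonoidHom.ext
    intro σ
    rcases Int.units_eq_one_or (Equiv.Perm.sign σ) with h1 | h1
    · have hmem : σ ∈ alternatingGroup (Fin n) := Equiv.Perm.mem_alternatingGroup.mpr h1
      rw [MonoidHom.mem_ker.mp (kφ hmem), MonoidHom.mem_ker.mp (kψ hmem)]
    · have hτsign : Equiv.Perm.sign (s * σ) = 1 := by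
        rw [map_mul, hsign, h1]; decide
      have hmem : s * σ ∈ alternatingGroup (Fin n) :=
        Equiv.Perm.mem_alternatingGroup.mpr hτsign
      have heq' : φ s = ψ s := heq
      have hστ : σ = s * (s * σ) := by rw [hs, Equiv.swap_mul_self_mul]
      calc φ σ = φ (s * (s * σ)) := congrArg φ hστ
        _ = φ s * φ (s * σ) := map_mul _ _ _
        _ = φ s * 1 := by rw [MonoidHom.mem_ker.mp (kφ hmem)]
        _ = ψ s * 1 := by rw [heq']
        _ = ψ s * ψ (s * σ) := by rw [MonoidHom.mem_ker.mp (kψ hmem)]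
        _ = ψ (s * (s * σ)) := (map_mul _ _ _).symm
        _ = ψ σ := (congrArg ψ hστ).symm
end

set_option maxHeartbeats 3000000 in
open scoped Classical in
lemma num_bounds {n : ℕ} (hn : 6 ≤ n) :
    Fintype.card (E n) * n.factorial * n ≤ (∑ φ : E n, Nat.card φ.range) * (n + 3) ∧
    (∑ φ : E n, Nat.card φ.range) ≤ Fintype.card (E n) * n.factorial := by
  set A := (univ.filter fun φ : E n => Function.Injective φ).card with hA'
  set B := (univ.filter fun φ : E n => ¬ Function.Injective φ).card with hB'
  set Num := ∑ φ : E n, Nat.card φ.range with hNum'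
  have hAB : A + B = Fintype.card (E n) := by
    rw [hA', hB', ← Finset.card_univ]
    exact Finset.card_filter_add_card_filter_not _
  have hA : n.factorial ≤ A := A_ge hn
  have hTn : T n ≤ 3 * (n-1).factorial := by
    have := T_le (n-1) (by omega)
    rwa [show n-1+1 = n by omega] at this
  have hB : B ≤ T n := B_le hn
  have hfact : n * (n-1).factorial = n.factorial := Nat.mul_factorial_pred (by omega)
  have hnB : n * B ≤ 3 * A := by
    calc n * B ≤ n * (3 * (n-1).factorial) := Nat.mul_le_mul_left _ (hB.trans hTn)
      _ = 3 * (n * (n-1).factorial) := by ring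
      _ = 3 * n.factorial := by rw [hfact]
      _ ≤ 3 * A := Nat.mul_le_mul_left _ hA
  have hlower : A * n.factorial ≤ Num := by
    calc A * n.factorial
        = ∑ _φ ∈ (univ.filter fun φ : E n => Function.Injective φ), n.factorial := by
          rw [Finset.sum_const, smul_eq_mul]
      _ = ∑ φ ∈ (univ.filter fun φ : E n => Function.Injective φ), Nat.card φ.range := by
          apply Finset.sum_congr rfl
          intro φ hφ
          exact (range_eq_of_inj (Finset.mem_filter.mp hφ).2).symm
      _ ≤ Num := Finset.sum_le_sum_of_subset (Finset.filter_subset _ _)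
  have hupper : Num ≤ Fintype.card (E n) * n.factorial := by
    rw [← Finset.card_univ]
    have := Finset.sum_le_card_nsmul univ (fun φ : E n => Nat.card φ.range) n.factorial
      (fun φ _ => range_le φ)
    simpa only [smul_eq_mul] using this
  constructor
  · calc Fintype.card (E n) * n.factorial * n = (A + B) * n.factorial * n := by rw [hAB]
      _ = A * n.factorial * n + (n * B) * n.factorial := by ring
      _ ≤ A * n.factorial * n + (3 * A) * n.factorial := by
          exact Nat.add_le_add_left (Nat.mul_le_mul_right _ hnB) _
      _ = (A * n.factorial) * (n + 3) := by ring
      _ ≤ Num * (n + 3) := Nat.mul_le_mul_right _ hlower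
  · exact hupper

theorem symmetric_group_expected_image_order :
    Filter.Tendsto (fun n : ℕ =>
      (∑ᶠ φ : Equiv.Perm (Fin n) →* Equiv.Perm (Fin n), (Nat.card φ.range : ℝ)) /
        ((Nat.card (Equiv.Perm (Fin n) →* Equiv.Perm (Fin n)) : ℝ) * n.factorial))
      Filter.atTop (nhds 1) := by
  have hlow : Filter.Tendsto (fun n : ℕ => (n:ℝ)/((n:ℝ)+3)) Filter.atTop (nhds 1) := by
    have h0 : Filter.Tendsto (fun n : ℕ => 3/(n:ℝ)) Filter.atTop (nhds 0) :=
      tendsto_const_div_atTop_nhds_zero_nat 3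
    have h1 : Filter.Tendsto (fun n : ℕ => 1 + 3/(n:ℝ)) Filter.atTop (nhds 1) := by
      simpa using tendsto_const_nhds.add h0
    have h2 : Filter.Tendsto (fun n : ℕ => (1 + 3/(n:ℝ))⁻¹) Filter.atTop (nhds 1) := by
      simpa using h1.inv₀ one_ne_zero
    apply h2.congr'
    filter_upwards [Filter.eventually_ge_atTop 1] with n hn1
    have hn0 : (n:ℝ) ≠ 0 := Nat.cast_ne_zero.mpr (by omega)
    field_simp
  apply tendsto_of_tendsto_of_tendsto_of_le_of_le' hlow tendsto_const_nhds
  · filter_upwards [Filter.eventually_ge_atTop 6] with n hn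
    obtain ⟨h1, h2⟩ := num_bounds hn
    have hNum : (∑ᶠ φ : E n, (Nat.card φ.range : ℝ)) = ((∑ φ : E n, Nat.card φ.range : ℕ) : ℝ) := by
      rw [finsum_eq_sum_of_fintype]
      push_cast
      rfl
    have hcard : (Nat.card (E n) : ℝ) = (Fintype.card (E n) : ℝ) := by
      rw [Nat.card_eq_fintype_card]
    have hEpos : 0 < Fintype.card (E n) := Fintype.card_pos_iff.mpr ⟨1⟩
    have hD : (0:ℝ) < (Fintype.card (E n) : ℝ) * n.factorial := by
      positivity
    rw [hNum, hcard]
    rw [div_le_div_iff₀ (by positivity) hD]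
    calc (n:ℝ) * ((Fintype.card (E n) : ℝ) * n.factorial)
        = ((Fintype.card (E n) * n.factorial * n : ℕ) : ℝ) := by push_cast; ring
      _ ≤ (((∑ φ : E n, Nat.card φ.range) * (n + 3) : ℕ) : ℝ) := Nat.cast_le.mpr h1
      _ = ((∑ φ : E n, Nat.card φ.range : ℕ) : ℝ) * ((n:ℝ) + 3) := by push_cast; ring
  · filter_upwards [Filter.eventually_ge_atTop 6] with n hn
    obtain ⟨h1, h2⟩ := num_bounds hn
    have hNum : (∑ᶠ φ : E n, (Nat.card φ.range : ℝ)) = ((∑ φ : E n, Nat.card φ.range : ℕ) : ℝ) := by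
      rw [finsum_eq_sum_of_fintype]
      push_cast
      rfl
    have hcard : (Nat.card (E n) : ℝ) = (Fintype.card (E n) : ℝ) := by
      rw [Nat.card_eq_fintype_card]
    have hEpos : 0 < Fintype.card (E n) := Fintype.card_pos_iff.mpr ⟨1⟩
    have hD : (0:ℝ) < (Fintype.card (E n) : ℝ) * n.factorial := by positivity
    rw [hNum, hcard, div_le_one hD]
    calc ((∑ φ : E n, Nat.card φ.range : ℕ) : ℝ)
        ≤ ((Fintype.card (E n) * n.factorial : ℕ) : ℝ) := Nat.cast_le.mpr h2
      _ = (Fintype.card (E n) : ℝ) * n.factorial := by push_cast; ring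
end

section
/- For all integers l, m ≥ 1, the number of group homomorphisms between dihedral groups satisfies Nat.card (DihedralGroup l →* DihedralGroup m) = 4 + 4m + m·gcd(l,m) if l and m are both even; = 1 + 2m + m·gcd(l,m) if l is even and m is odd; = 2 + m·gcd(l,m) if l is odd and m is even; and = 1 + m·gcd(l,m) if l and m are both odd. -/
namespace DihedralHomCountAux

open DihedralGroup

private lemma pow_eq_pow_of_modEq {G : Type*} [Group G] {a : G} {l : ℕ} (ha : a ^ l = 1)
    {s t : ℕ} (h : s ≡ t [MOD l]) : a ^ s = a ^ t :=
  pow_eq_pow_iff_modEq.mpr (h.of_dvd (orderOf_dvd_of_pow_eq_one ha))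

section chi

variable {G : Type*} [Group G] {l : ℕ} [NeZero l] {a b : G}

private lemma chi_add (ha : a ^ l = 1) (i j : ZMod l) :
    a ^ (i + j).val = a ^ i.val * a ^ j.val := by
  rw [← pow_add]
  exact pow_eq_pow_of_modEq ha (by rw [ZMod.val_add]; exact Nat.mod_modEq _ _)

private lemma chi_neg (ha : a ^ l = 1) (i : ZMod l) :
    a ^ (-i).val = (a ^ i.val)⁻¹ := by
  apply eq_inv_of_mul_eq_one_left
  rw [← chi_add ha, neg_add_cancel, ZMod.val_zero, pow_zero]

private lemma conj_pow (hb : b ^ 2 = 1) (hba : (b * a) ^ 2 = 1) (k : ℕ) :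
    b * a ^ k * b = (a ^ k)⁻¹ := by
  have hbb : b * b = 1 := by rw [← sq]; exact hb
  have h1 : b * a * b = a⁻¹ := by
    apply eq_inv_of_mul_eq_one_left
    calc b * a * b * a = (b * a) ^ 2 := by rw [sq]; group
      _ = 1 := hba
  induction k with
  | zero => simpa using hbb
  | succ k ih =>
    have key : (b * a ^ k * b) * (b * a * b) = b * a ^ (k + 1) * b := by
      calc (b * a ^ k * b) * (b * a * b) = b * a ^ k * (b * b) * a * b := by group
        _ = b * (a ^ k * a) * b := by rw [hbb]; group
        _ = b * a ^ (k + 1) * b := by rw [pow_succ]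
    rw [← key, ih, h1, ← mul_inv_rev, ← pow_succ']

private lemma conj_pow' (hb : b ^ 2 = 1) (hba : (b * a) ^ 2 = 1) (k : ℕ) :
    a ^ k * b = b * (a ^ k)⁻¹ := by
  have hbb : b * b = 1 := by rw [← sq]; exact hb
  calc a ^ k * b = (b * b) * (a ^ k * b) := by rw [hbb, one_mul]
    _ = b * (b * a ^ k * b) := by group
    _ = b * (a ^ k)⁻¹ := by rw [conj_pow hb hba]

/-- Build a homomorphism out of the dihedral group from a pair satisfying the relations. -/
private def mkHom (a b : G) (ha : a ^ l = 1) (hb : b ^ 2 = 1) (hba : (b * a) ^ 2 = 1) :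
    DihedralGroup l →* G :=
  MonoidHom.mk' (fun x => match x with
    | r i => a ^ i.val
    | sr i => b * a ^ i.val) (by
    rintro (i | i) (j | j)
    · show a ^ (i + j).val = a ^ i.val * a ^ j.val
      exact chi_add ha i j
    · show b * a ^ (j - i).val = a ^ i.val * (b * a ^ j.val)
      rw [sub_eq_add_neg, add_comm, chi_add ha, chi_neg ha, ← mul_assoc]
      conv_rhs => rw [← mul_assoc, conj_pow' hb hba]
    · show b * a ^ (i + j).val = b * a ^ i.val * a ^ j.val
      rw [chi_add ha, mul_assoc]
    · show a ^ (j - i).val = b * a ^ i.val * (b * a ^ j.val)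
      have : b * a ^ i.val * (b * a ^ j.val) = (b * a ^ i.val * b) * a ^ j.val := by group
      rw [this, conj_pow hb hba, ← chi_neg ha, sub_eq_add_neg, add_comm, chi_add ha])

private def P (m l : ℕ) (a b : DihedralGroup m) : Prop :=
  a ^ l = 1 ∧ b ^ 2 = 1 ∧ (b * a) ^ 2 = 1

/-- Homomorphisms correspond to pairs satisfying the relations. -/
private def homEquiv (l m : ℕ) [NeZero l] :
    (DihedralGroup l →* DihedralGroup m) ≃
      {p : DihedralGroup m × DihedralGroup m // P m l p.1 p.2} where
  toFun f := ⟨(f (r 1), f (sr 0)), by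
    refine ⟨?_, ?_, ?_⟩
    · rw [← map_pow, r_one_pow, ZMod.natCast_self, ← one_def, map_one]
    · have : (sr 0 : DihedralGroup l) ^ 2 = 1 := by rw [sq, sr_mul_self]
      rw [← map_pow, this, map_one]
    · have : (sr 0 * r 1 : DihedralGroup l) ^ 2 = 1 := by
        rw [sr_mul_r, zero_add, sq, sr_mul_sr, sub_self, one_def]
      rw [← map_mul, ← map_pow, this, map_one]⟩
  invFun p := mkHom p.1.1 p.1.2 p.2.1 p.2.2.1 p.2.2.2
  left_inv f := by
    ext x
    rcases x with i | i
    · show f (r 1) ^ i.val = f (r i)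
      rw [← map_pow, r_one_pow, ZMod.natCast_zmod_val]
    · show f (sr 0) * f (r 1) ^ i.val = f (sr i)
      rw [← map_pow, r_one_pow, ZMod.natCast_zmod_val, ← map_mul, sr_mul_r, zero_add]
  right_inv p := by
    obtain ⟨⟨a, b⟩, ha, hb, hba⟩ := p
    refine Subtype.ext (Prod.ext ?_ ?_)
    · show a ^ (1 : ZMod l).val = a
      have h1 : a ^ (1 : ZMod l).val = a ^ 1 :=
        pow_eq_pow_of_modEq ha (by rw [ZMod.val_one_eq_one_mod]; exact Nat.mod_modEq 1 l)
      rw [h1, pow_one]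
    · show b * a ^ (0 : ZMod l).val = b
      rw [ZMod.val_zero, pow_zero, mul_one]

end chi

/-- Sort pairs of dihedral group elements by the constructors. -/
private def sortEquiv {m : ℕ} (Q : DihedralGroup m → DihedralGroup m → Prop) :
    {p : DihedralGroup m × DihedralGroup m // Q p.1 p.2} ≃
      ({q : ZMod m × ZMod m // Q (r q.1) (r q.2)} ⊕
       {q : ZMod m × ZMod m // Q (r q.1) (sr q.2)}) ⊕
      ({q : ZMod m × ZMod m // Q (sr q.1) (r q.2)} ⊕
       {q : ZMod m × ZMod m // Q (sr q.1) (sr q.2)}) where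
  toFun := fun
    | ⟨⟨r i, r j⟩, h⟩ => Sum.inl (Sum.inl ⟨(i, j), h⟩)
    | ⟨⟨r i, sr j⟩, h⟩ => Sum.inl (Sum.inr ⟨(i, j), h⟩)
    | ⟨⟨sr i, r j⟩, h⟩ => Sum.inr (Sum.inl ⟨(i, j), h⟩)
    | ⟨⟨sr i, sr j⟩, h⟩ => Sum.inr (Sum.inr ⟨(i, j), h⟩)
  invFun := fun
    | Sum.inl (Sum.inl ⟨q, h⟩) => ⟨(r q.1, r q.2), h⟩
    | Sum.inl (Sum.inr ⟨q, h⟩) => ⟨(r q.1, sr q.2), h⟩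
    | Sum.inr (Sum.inl ⟨q, h⟩) => ⟨(sr q.1, r q.2), h⟩
    | Sum.inr (Sum.inr ⟨q, h⟩) => ⟨(sr q.1, sr q.2), h⟩
  left_inv := by rintro ⟨⟨i | i, j | j⟩, h⟩ <;> rfl
  right_inv := by rintro ((⟨⟨i, j⟩, h⟩ | ⟨⟨i, j⟩, h⟩) | (⟨⟨i, j⟩, h⟩ | ⟨⟨i, j⟩, h⟩)) <;> rfl

private lemma r_pow (m n : ℕ) (i : ZMod m) :
    (r i : DihedralGroup m) ^ n = r ((n : ZMod m) * i) := by
  induction n with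
  | zero => rw [pow_zero, one_def]; congr 1; push_cast; ring
  | succ k ih => rw [pow_succ, ih, r_mul_r]; congr 1; push_cast; ring

private lemma r_eq_one {m : ℕ} (x : ZMod m) : (r x : DihedralGroup m) = 1 ↔ x = 0 := by
  rw [one_def]; exact ⟨fun h => by injection h, fun h => by rw [h]⟩

private lemma r_pow_eq_one {m : ℕ} (n : ℕ) (x : ZMod m) :
    (r x : DihedralGroup m) ^ n = 1 ↔ (n : ZMod m) * x = 0 := by
  rw [r_pow, r_eq_one]

private lemma sr_pow_eq_one {m : ℕ} (n : ℕ) (x : ZMod m) :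
    (sr x : DihedralGroup m) ^ n = 1 ↔ Even n := by
  rw [← orderOf_dvd_iff_pow_eq_one, orderOf_sr]
  exact ⟨fun h => even_iff_two_dvd.mpr h, fun h => even_iff_two_dvd.mp h⟩

/-- The number of solutions of `k * x = 0` in `ZMod m`. -/
private lemma card_mulker (m : ℕ) (hm : m ≠ 0) (k : ℕ) :
    Nat.card {x : ZMod m // (k : ZMod m) * x = 0} = Nat.gcd k m := by
  haveI : NeZero m := ⟨hm⟩
  set f : ZMod m →+ ZMod m := AddMonoidHom.mulLeft (k : ZMod m) with hf
  have hker : ∀ x : ZMod m, x ∈ f.ker ↔ (k : ZMod m) * x = 0 := by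
    intro x; rw [AddMonoidHom.mem_ker]; rfl
  have hrange : f.range = AddSubgroup.zmultiples ((k : ℕ) : ZMod m) := by
    ext x
    simp only [AddMonoidHom.mem_range, AddSubgroup.mem_zmultiples_iff]
    constructor
    · rintro ⟨y, rfl⟩
      refine ⟨(y.val : ℤ), ?_⟩
      show (y.val : ℤ) • ((k : ℕ) : ZMod m) = (k : ZMod m) * y
      rw [zsmul_eq_mul, Int.cast_natCast, ZMod.natCast_zmod_val, mul_comm]
    · rintro ⟨z, rfl⟩
      refine ⟨((z : ℤ) : ZMod m), ?_⟩
      show (k : ZMod m) * ((z : ℤ) : ZMod m) = (z : ℤ) • ((k : ℕ) : ZMod m)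
      rw [zsmul_eq_mul, mul_comm]
  have h1 := AddSubgroup.card_eq_card_quotient_mul_card_addSubgroup f.ker
  have h2 : Nat.card (ZMod m ⧸ f.ker) = Nat.card f.range :=
    Nat.card_congr (QuotientAddGroup.quotientKerEquivRange f).toEquiv
  have h3 : Nat.card f.range = m / Nat.gcd m k := by
    rw [hrange, Nat.card_zmultiples, ZMod.addOrderOf_coe k hm]
  have hcard : Nat.card (ZMod m) = m := Nat.card_zmod m
  have hdvd : Nat.gcd m k ∣ m := Nat.gcd_dvd_left m k
  have hg : Nat.gcd m k ≠ 0 := fun h => hm (Nat.eq_zero_of_gcd_eq_zero_left h)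
  rw [hcard, h2, h3] at h1
  have hpos : 0 < m / Nat.gcd m k :=
    Nat.div_pos (Nat.le_of_dvd (Nat.pos_of_ne_zero hm) hdvd) (Nat.pos_of_ne_zero hg)
  have hkercard : Nat.card f.ker = Nat.gcd m k := by
    apply Nat.eq_of_mul_eq_mul_left hpos
    rw [← h1, Nat.div_mul_cancel hdvd]
  rw [Nat.gcd_comm k m, ← hkercard]
  exact Nat.card_congr (Equiv.subtypeEquivRight fun x => (hker x).symm)

private lemma card_two_tor (m : ℕ) (hm : m ≠ 0) :
    Nat.card {x : ZMod m // 2 * x = 0} = Nat.gcd 2 m := by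
  have h := card_mulker m hm 2
  rwa [Nat.cast_ofNat] at h

private lemma gcd_two_even {m : ℕ} (h : Even m) : Nat.gcd 2 m = 2 :=
  Nat.gcd_eq_left h.two_dvd

private lemma gcd_two_odd {m : ℕ} (h : Odd m) : Nat.gcd 2 m = 1 :=
  h.coprime_two_left

private lemma card_eqzero (m : ℕ) (hm : m ≠ 0) :
    Nat.card {x : ZMod m // x = 0} = 1 := by
  haveI : NeZero m := ⟨hm⟩
  rw [Nat.card_eq_fintype_card, Fintype.card_subtype_eq]

private lemma card_true (m : ℕ) (hm : m ≠ 0) :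
    Nat.card {x : ZMod m // True} = m := by
  rw [Nat.card_congr (Equiv.subtypeUnivEquiv fun _ => trivial), Nat.card_zmod]

/-- torsion conditions combine: even case -/
private lemma and_tor_even {m : ℕ} (k : ℕ) (x : ZMod m) :
    (((2 * k : ℕ) : ZMod m) * x = 0 ∧ 2 * x = 0) ↔ 2 * x = 0 := by
  constructor
  · exact And.right
  · intro h
    refine ⟨?_, h⟩
    calc ((2 * k : ℕ) : ZMod m) * x = (k : ZMod m) * (2 * x) := by push_cast; ring
      _ = 0 := by rw [h, mul_zero]

private lemma and_tor_odd {m : ℕ} (k : ℕ) (x : ZMod m) :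
    (((2 * k + 1 : ℕ) : ZMod m) * x = 0 ∧ 2 * x = 0) ↔ x = 0 := by
  constructor
  · rintro ⟨h1, h2⟩
    have hx : ((2 * k + 1 : ℕ) : ZMod m) * x = (k : ZMod m) * (2 * x) + x := by
      push_cast; ring
    rw [hx, h2, mul_zero, zero_add] at h1
    exact h1
  · rintro rfl
    simp

private lemma P_r_r {m l : ℕ} (i j : ZMod m) :
    P m l (r i) (r j) ↔ (((l : ZMod m) * i = 0 ∧ 2 * i = 0) ∧ 2 * j = 0) := by
  unfold P
  rw [r_pow_eq_one, r_mul_r, r_pow_eq_one, r_pow_eq_one, Nat.cast_ofNat]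
  constructor
  · rintro ⟨h1, h2, h3⟩
    refine ⟨⟨h1, ?_⟩, h2⟩
    have : 2 * (j + i) = 2 * j + 2 * i := by ring
    rw [this, h2, zero_add] at h3
    exact h3
  · rintro ⟨⟨h1, h4⟩, h2⟩
    refine ⟨h1, h2, ?_⟩
    have : 2 * (j + i) = 2 * j + 2 * i := by ring
    rw [this, h2, h4, zero_add]

private lemma P_r_sr {m l : ℕ} (i j : ZMod m) :
    P m l (r i) (sr j) ↔ ((l : ZMod m) * i = 0 ∧ True) := by
  unfold P
  rw [r_pow_eq_one, sr_mul_r, sr_pow_eq_one, sr_pow_eq_one]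
  simp [even_two]

private lemma P_sr_r {m l : ℕ} (hl : Even l) (i j : ZMod m) :
    P m l (sr i) (r j) ↔ (True ∧ 2 * j = 0) := by
  unfold P
  rw [sr_pow_eq_one, r_mul_sr, r_pow_eq_one, sr_pow_eq_one, Nat.cast_ofNat]
  simp [hl, even_two]

private lemma P_sr_sr {m l : ℕ} (hl : Even l) (i j : ZMod m) :
    P m l (sr i) (sr j) ↔ 2 * (i - j) = 0 := by
  unfold P
  rw [sr_pow_eq_one, sr_mul_sr, sr_pow_eq_one, r_pow_eq_one, Nat.cast_ofNat]
  simp [hl, even_two]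

private lemma P_sr_isEmpty_r {m l : ℕ} (hl : ¬ Even l) :
    IsEmpty {q : ZMod m × ZMod m // P m l (sr q.1) (r q.2)} := by
  refine ⟨fun q => ?_⟩
  exact hl ((sr_pow_eq_one l q.1.1).mp q.2.1)

private lemma P_sr_isEmpty_sr {m l : ℕ} (hl : ¬ Even l) :
    IsEmpty {q : ZMod m × ZMod m // P m l (sr q.1) (sr q.2)} := by
  refine ⟨fun q => ?_⟩
  exact hl ((sr_pow_eq_one l q.1.1).mp q.2.1)

/-- The diagonal-type set in the (sr, sr) quadrant. -/
private def eEquiv {m : ℕ} :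
    {q : ZMod m × ZMod m // 2 * (q.1 - q.2) = 0} ≃ ZMod m × {x : ZMod m // 2 * x = 0} where
  toFun q := (q.1.2, ⟨q.1.1 - q.1.2, q.2⟩)
  invFun p := ⟨(p.2.1 + p.1, p.1), by simpa using p.2.2⟩
  left_inv := by rintro ⟨⟨i, j⟩, h⟩; simp
  right_inv := by rintro ⟨j, x, hx⟩; simp

end DihedralHomCountAux

open DihedralHomCountAux DihedralGroup in
theorem hom_dihedral_to_dihedral_count (l m : ℕ) (hl : 1 ≤ l) (hm : 1 ≤ m) :
    Nat.card (DihedralGroup l →* DihedralGroup m) =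
      if Even l then
        (if Even m then 4 + 4 * m + m * Nat.gcd l m else 1 + 2 * m + m * Nat.gcd l m)
      else
        (if Even m then 2 + m * Nat.gcd l m else 1 + m * Nat.gcd l m) := by
  haveI : NeZero l := ⟨by omega⟩
  haveI : NeZero m := ⟨by omega⟩
  have hm0 : m ≠ 0 := by omega
  rw [Nat.card_congr (homEquiv l m), Nat.card_congr (sortEquiv (P m l)),
    Nat.card_sum, Nat.card_sum, Nat.card_sum]
  -- the (r, sr) quadrant
  have hB : Nat.card {q : ZMod m × ZMod m // P m l (r q.1) (sr q.2)} = Nat.gcd l m * m := by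
    have e1 : {q : ZMod m × ZMod m // P m l (r q.1) (sr q.2)} ≃
        {q : ZMod m × ZMod m // (l : ZMod m) * q.1 = 0 ∧ True} :=
      Equiv.subtypeEquivRight fun q => P_r_sr q.1 q.2
    have e2 : {q : ZMod m × ZMod m // (l : ZMod m) * q.1 = 0 ∧ True} ≃
        {i : ZMod m // (l : ZMod m) * i = 0} × {j : ZMod m // True} :=
      Equiv.subtypeProdEquivProd (p := fun i : ZMod m => (l : ZMod m) * i = 0)
        (q := fun _ : ZMod m => True)
    rw [Nat.card_congr (e1.trans e2), Nat.card_prod, card_mulker m hm0 l, card_true m hm0]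
  rw [hB]
  by_cases hleven : Even l
  · obtain ⟨k, hk⟩ := hleven
    have hl2k : l = 2 * k := by omega
    have hlev : Even l := ⟨k, hk⟩
    have hA : Nat.card {q : ZMod m × ZMod m // P m l (r q.1) (r q.2)} =
        Nat.gcd 2 m * Nat.gcd 2 m := by
      have e1 : {q : ZMod m × ZMod m // P m l (r q.1) (r q.2)} ≃
          {q : ZMod m × ZMod m // 2 * q.1 = 0 ∧ 2 * q.2 = 0} :=
        Equiv.subtypeEquivRight fun q => by
          rw [P_r_r, hl2k, and_tor_even k q.1]
      have e2 : {q : ZMod m × ZMod m // 2 * q.1 = 0 ∧ 2 * q.2 = 0} ≃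
          {i : ZMod m // 2 * i = 0} × {j : ZMod m // 2 * j = 0} :=
        Equiv.subtypeProdEquivProd (p := fun i : ZMod m => 2 * i = 0)
          (q := fun j : ZMod m => 2 * j = 0)
      rw [Nat.card_congr (e1.trans e2), Nat.card_prod, card_two_tor m hm0]
    have hC : Nat.card {q : ZMod m × ZMod m // P m l (sr q.1) (r q.2)} =
        m * Nat.gcd 2 m := by
      have e1 : {q : ZMod m × ZMod m // P m l (sr q.1) (r q.2)} ≃
          {q : ZMod m × ZMod m // True ∧ 2 * q.2 = 0} :=
        Equiv.subtypeEquivRight fun q => P_sr_r hlev q.1 q.2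
      have e2 : {q : ZMod m × ZMod m // True ∧ 2 * q.2 = 0} ≃
          {i : ZMod m // True} × {j : ZMod m // 2 * j = 0} :=
        Equiv.subtypeProdEquivProd (p := fun _ : ZMod m => True)
          (q := fun j : ZMod m => 2 * j = 0)
      rw [Nat.card_congr (e1.trans e2), Nat.card_prod, card_true m hm0, card_two_tor m hm0]
    have hE : Nat.card {q : ZMod m × ZMod m // P m l (sr q.1) (sr q.2)} =
        m * Nat.gcd 2 m := by
      have e1 : {q : ZMod m × ZMod m // P m l (sr q.1) (sr q.2)} ≃
          {q : ZMod m × ZMod m // 2 * (q.1 - q.2) = 0} :=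
        Equiv.subtypeEquivRight fun q => P_sr_sr hlev q.1 q.2
      rw [Nat.card_congr (e1.trans eEquiv), Nat.card_prod, Nat.card_zmod, card_two_tor m hm0]
    rw [hA, hC, hE, if_pos hlev]
    by_cases hmeven : Even m
    · rw [if_pos hmeven, gcd_two_even hmeven]
      ring
    · rw [if_neg hmeven, gcd_two_odd (Nat.odd_iff.mpr (Nat.not_even_iff.mp hmeven))]
      ring
  · have hlodd : Odd l := Nat.odd_iff.mpr (Nat.not_even_iff.mp hleven)
    obtain ⟨k', hk'⟩ := hlodd
    have hl2k : l = 2 * k' + 1 := by omega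
    have hA : Nat.card {q : ZMod m × ZMod m // P m l (r q.1) (r q.2)} =
        1 * Nat.gcd 2 m := by
      have e1 : {q : ZMod m × ZMod m // P m l (r q.1) (r q.2)} ≃
          {q : ZMod m × ZMod m // q.1 = 0 ∧ 2 * q.2 = 0} :=
        Equiv.subtypeEquivRight fun q => by
          rw [P_r_r, hl2k, and_tor_odd k' q.1]
      have e2 : {q : ZMod m × ZMod m // q.1 = 0 ∧ 2 * q.2 = 0} ≃
          {i : ZMod m // i = 0} × {j : ZMod m // 2 * j = 0} :=
        Equiv.subtypeProdEquivProd (p := fun i : ZMod m => i = 0)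
          (q := fun j : ZMod m => 2 * j = 0)
      rw [Nat.card_congr (e1.trans e2), Nat.card_prod, card_eqzero m hm0, card_two_tor m hm0]
    have hC : Nat.card {q : ZMod m × ZMod m // P m l (sr q.1) (r q.2)} = 0 := by
      haveI := P_sr_isEmpty_r (m := m) hleven
      exact Nat.card_of_isEmpty
    have hE : Nat.card {q : ZMod m × ZMod m // P m l (sr q.1) (sr q.2)} = 0 := by
      haveI := P_sr_isEmpty_sr (m := m) hleven
      exact Nat.card_of_isEmpty
    rw [hA, hC, hE, if_neg hleven]
    by_cases hmeven : Even m
    · rw [if_pos hmeven, gcd_two_even hmeven]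
      ring
    · rw [if_neg hmeven, gcd_two_odd (Nat.odd_iff.mpr (Nat.not_even_iff.mp hmeven))]
      ring
end

section
/- For every integer n ≥ 1, the number of elements of the hyperoctahedral group C_n of order at most 2 satisfies, as an identity of rational numbers, Nat.card {w : C_n // w^2 = 1} = Σ_{k=0}^{⌊n/2⌋} 2^n · n! / (2^{2k} · k! · (n−2k)!). -/
/-- The action of `Sₙ` on `(ℤ/2)ⁿ` by permuting coordinates: `(σ • x) i = x (σ⁻¹ i)`. -/
def cnHom (n : ℕ) : Equiv.Perm (Fin n) →* MulAut (Multiplicative (Fin n → ZMod 2)) :=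
  MonoidHom.mk'
    (fun σ => AddEquiv.toMultiplicative
      (AddEquiv.arrowCongr (σ : Fin n ≃ Fin n) (AddEquiv.refl (ZMod 2))))
    (by intro σ τ; ext x; rfl)

/-- The hyperoctahedral group `Cₙ = (ℤ/2)ⁿ ⋊ Sₙ`, the symmetry group of the `n`-cube,
with multiplication `(x, σ)(y, τ) = (x + σ • y, στ)`. -/
abbrev Cn (n : ℕ) : Type :=
  SemidirectProduct (Multiplicative (Fin n → ZMod 2)) (Equiv.Perm (Fin n)) (cnHom n)

namespace CnAux

open Equiv Equiv.Perm

def A (n : ℕ) : Type :=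
  {p : (Fin n → ZMod 2) × Equiv.Perm (Fin n) // p.2 * p.2 = 1 ∧ ∀ i, p.1 (p.2 i) = p.1 i}

instance (n : ℕ) : Finite (A n) := by unfold A; infer_instance

def fib (n : ℕ) (p : Fin (n+1)) : Type := {q : A (n+1) // q.1.2 0 = p}

instance (n : ℕ) (p : Fin (n+1)) : Finite (fib n p) := by unfold fib; infer_instance

lemma z2 : ∀ a b : ZMod 2, a + b = 0 ↔ b = a := by decide

lemma left_eq (n : ℕ) (σ : Equiv.Perm (Fin n)) (x : Multiplicative (Fin n → ZMod 2)) :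
    x * cnHom n σ x = 1 ↔ ∀ i, Multiplicative.toAdd x (σ i) = Multiplicative.toAdd x i := by
  have hrep : x * cnHom n σ x = 1 ↔
      ∀ i, Multiplicative.toAdd x i + Multiplicative.toAdd x (σ⁻¹ i) = 0 := by
    constructor
    · intro h i
      exact congrFun (congrArg Multiplicative.toAdd h) i
    · intro h
      apply Multiplicative.toAdd.injective
      funext i
      exact h i
  rw [hrep]
  constructor
  · intro h i
    have := (z2 _ _).mp (h (σ i))
    rw [Equiv.Perm.coe_inv, Equiv.symm_apply_apply] at this
    exact this.symm
  · intro h i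
    rw [z2]
    have := h (σ⁻¹ i)
    rw [Equiv.Perm.coe_inv, Equiv.apply_symm_apply] at this
    exact this.symm

lemma cn_sq (n : ℕ) (w : Cn n) : w ^ 2 = 1 ↔
    (w.right * w.right = 1 ∧ ∀ i, (Multiplicative.toAdd w.left) (w.right i) = (Multiplicative.toAdd w.left) i) := by
  rw [sq, SemidirectProduct.ext_iff]
  simp only [SemidirectProduct.mul_left, SemidirectProduct.mul_right, SemidirectProduct.one_left,
    SemidirectProduct.one_right]
  rw [left_eq, and_comm]

def cnEquivA (n : ℕ) : {w : Cn n // w ^ 2 = 1} ≃ A n where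
  toFun w := ⟨(Multiplicative.toAdd w.1.left, w.1.right), ((cn_sq n w.1).mp w.2)⟩
  invFun q := ⟨⟨Multiplicative.ofAdd q.1.1, q.1.2⟩, (cn_sq n _).mpr q.2⟩
  left_inv w := rfl
  right_inv q := rfl

lemma decomp_fst {n : ℕ} (σ : Perm (Fin (n+1))) : (decomposeFin σ).1 = σ 0 := by
  conv_rhs => rw [← Equiv.symm_apply_apply Equiv.Perm.decomposeFin σ]
  rw [show (decomposeFin σ) = ((decomposeFin σ).1, (decomposeFin σ).2) from rfl,
    Equiv.Perm.decomposeFin_symm_apply_zero]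

lemma decomp_eq {n : ℕ} (σ : Perm (Fin (n+1))) :
    σ = decomposeFin.symm (σ 0, (decomposeFin σ).2) := by
  rw [← decomp_fst]
  exact (Equiv.symm_apply_apply _ σ).symm

lemma H1 {n : ℕ} (τ : Perm (Fin n)) :
    decomposeFin.symm (0, τ) * decomposeFin.symm (0, τ) = 1 ↔ τ * τ = 1 := by
  simp only [Equiv.Perm.ext_iff, Perm.mul_apply, Perm.one_apply]
  constructor
  · intro h j
    have := h j.succ
    simpa [swap_self, Fin.succ_inj] using this
  · intro h i
    induction i using Fin.cases with
    | zero => simp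
    | succ j => simp [swap_self, h j]

lemma H2 {n : ℕ} (x : Fin (n+1) → ZMod 2) (τ : Perm (Fin n)) :
    (∀ i, x (decomposeFin.symm (0, τ) i) = x i) ↔
      (∀ j, (x ∘ Fin.succ) (τ j) = (x ∘ Fin.succ) j) := by
  constructor
  · intro h j
    have := h j.succ
    simpa [swap_self] using this
  · intro h i
    induction i using Fin.cases with
    | zero => simp
    | succ j => simpa [swap_self] using h j

lemma H3 {n : ℕ} (τ : Perm (Fin (n+1))) :
    decomposeFin.symm (1, τ) * decomposeFin.symm (1, τ) = 1 ↔ (τ 0 = 0 ∧ τ * τ = 1) := by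
  have hone : (1 : Fin (n+2)) = (0 : Fin (n+1)).succ := by simp
  constructor
  · intro h
    have h' := Equiv.Perm.ext_iff.mp h
    have h0 : τ 0 = 0 := by
      have := h' 0
      rw [Perm.mul_apply, Perm.one_apply, Equiv.Perm.decomposeFin_symm_apply_zero, hone,
        Equiv.Perm.decomposeFin_symm_apply_succ] at this
      -- this : swap 0 1 (τ 0).succ = 0
      have h2 : (τ 0).succ = (1 : Fin (n+2)) := by
        have := congrArg (swap (0 : Fin (n+2)) 1) this
        simpa [Equiv.swap_apply_self] using this
      rw [hone, Fin.succ_inj] at h2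
      exact h2
    refine ⟨h0, ?_⟩
    rw [Equiv.Perm.ext_iff]
    intro j
    rw [Perm.mul_apply, Perm.one_apply]
    rcases eq_or_ne j 0 with rfl | hj
    · rw [h0, h0]
    · have hτj : τ j ≠ 0 := fun hc => hj (τ.injective (hc.trans h0.symm))
      have := h' j.succ
      rw [Perm.mul_apply, Perm.one_apply, Equiv.Perm.decomposeFin_symm_apply_succ,
        Equiv.swap_apply_of_ne_of_ne (Fin.succ_ne_zero _)
          (by rw [hone, Ne, Fin.succ_inj]; exact hτj),
        Equiv.Perm.decomposeFin_symm_apply_succ] at this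
      -- this : swap 0 1 (τ (τ j)).succ = j.succ
      rcases eq_or_ne (τ (τ j)) 0 with hc | hc
      · rw [hc, ← hone] at this
        rw [Equiv.swap_apply_right] at this
        exact absurd this.symm (Fin.succ_ne_zero j)
      · rw [Equiv.swap_apply_of_ne_of_ne (Fin.succ_ne_zero _)
          (by rw [hone, Ne, Fin.succ_inj]; exact hc), Fin.succ_inj] at this
        exact this
  · rintro ⟨h0, h⟩
    have h' := Equiv.Perm.ext_iff.mp h
    simp only [Perm.mul_apply, Perm.one_apply] at h'
    ext i
    rw [Perm.mul_apply, Perm.one_apply]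
    induction i using Fin.cases with
    | zero =>
      rw [Equiv.Perm.decomposeFin_symm_apply_zero, hone,
        Equiv.Perm.decomposeFin_symm_apply_succ, h0, ← hone, Equiv.swap_apply_right]
    | succ j =>
      rcases eq_or_ne j 0 with rfl | hj
      · rw [Equiv.Perm.decomposeFin_symm_apply_succ, h0, ← hone, Equiv.swap_apply_right,
          Equiv.Perm.decomposeFin_symm_apply_zero, hone]
      · have hτj : τ j ≠ 0 := fun hc => hj (τ.injective (hc.trans h0.symm))
        rw [Equiv.Perm.decomposeFin_symm_apply_succ,
          Equiv.swap_apply_of_ne_of_ne (Fin.succ_ne_zero _)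
            (by rw [hone, Ne, Fin.succ_inj]; exact hτj),
          Equiv.Perm.decomposeFin_symm_apply_succ, h' j,
          Equiv.swap_apply_of_ne_of_ne (Fin.succ_ne_zero _)
            (by rw [hone, Ne, Fin.succ_inj]; exact hj)]

lemma H4 {n : ℕ} (x : Fin (n+2) → ZMod 2) (τ : Perm (Fin (n+1))) (h0 : τ 0 = 0) :
    (∀ i, x (decomposeFin.symm (1, τ) i) = x i) ↔
      (x 1 = x 0 ∧ ∀ j, (x ∘ Fin.succ) (τ j) = (x ∘ Fin.succ) j) := by
  have hone : (1 : Fin (n+2)) = (0 : Fin (n+1)).succ := by simp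
  constructor
  · intro h
    refine ⟨by simpa using h 0, fun j => ?_⟩
    rcases eq_or_ne j 0 with rfl | hj
    · simp [h0]
    · have hτj : τ j ≠ 0 := fun hc => hj (τ.injective (hc.trans h0.symm))
      have := h j.succ
      rw [Equiv.Perm.decomposeFin_symm_apply_succ,
        Equiv.swap_apply_of_ne_of_ne (Fin.succ_ne_zero _)
          (by rw [hone, Ne, Fin.succ_inj]; exact hτj)] at this
      exact this
  · rintro ⟨hx, h⟩ i
    induction i using Fin.cases with
    | zero => simpa using hx
    | succ j =>
      rcases eq_or_ne j 0 with rfl | hj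
      · rw [Equiv.Perm.decomposeFin_symm_apply_succ, h0, ← hone, Equiv.swap_apply_right]
        exact hx.symm
      · have hτj : τ j ≠ 0 := fun hc => hj (τ.injective (hc.trans h0.symm))
        rw [Equiv.Perm.decomposeFin_symm_apply_succ,
          Equiv.swap_apply_of_ne_of_ne (Fin.succ_ne_zero _)
            (by rw [hone, Ne, Fin.succ_inj]; exact hτj)]
        exact h j

def fib0Equiv (n : ℕ) : fib n 0 ≃ ZMod 2 × A n where
  toFun q := (q.1.1.1 0, ⟨(q.1.1.1 ∘ Fin.succ, (decomposeFin q.1.1.2).2), by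
    obtain ⟨⟨⟨x, σ⟩, hσ, hx⟩, h0⟩ := q
    simp only at h0 ⊢
    rw [decomp_eq σ, h0] at hσ hx
    rw [← H1, ← H2]
    exact ⟨hσ, hx⟩⟩)
  invFun r := ⟨⟨(Fin.cons r.1 r.2.1.1, decomposeFin.symm (0, r.2.1.2)), by
      refine ⟨(H1 _).mpr r.2.2.1, (H2 _ _).mpr ?_⟩
      intro j
      simpa [Fin.cons_succ] using r.2.2.2 j⟩,
    by simp⟩
  left_inv q := by
    obtain ⟨⟨⟨x, σ⟩, hσ, hx⟩, h0⟩ := q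
    simp only at h0
    apply Subtype.ext
    apply Subtype.ext
    refine Prod.ext ?_ ?_
    · exact Fin.cons_self_tail x
    · simp only
      conv_rhs => rw [decomp_eq σ, h0]
  right_inv r := by
    obtain ⟨b, ⟨⟨y, τ⟩, hτ, hy⟩⟩ := r
    refine Prod.ext (by simp) ?_
    apply Subtype.ext
    refine Prod.ext ?_ ?_
    · funext j
      simp [Fin.cons_succ]
    · simp

def fib1Equiv (n : ℕ) : fib (n+1) 1 ≃ fib n 0 where
  toFun q := ⟨⟨(q.1.1.1 ∘ Fin.succ, (decomposeFin q.1.1.2).2), by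
      obtain ⟨⟨⟨x, σ⟩, hσ, hx⟩, h1⟩ := q
      simp only at h1 ⊢
      rw [decomp_eq σ, h1] at hσ hx
      obtain ⟨h0, hτ⟩ := (H3 _).mp hσ
      exact ⟨hτ, ((H4 _ _ h0).mp hx).2⟩⟩, by
    obtain ⟨⟨⟨x, σ⟩, hσ, hx⟩, h1⟩ := q
    simp only at h1 ⊢
    rw [decomp_eq σ, h1] at hσ
    exact ((H3 _).mp hσ).1⟩
  invFun r := ⟨⟨⟨Fin.cons (r.1.1.1 0) r.1.1.1, decomposeFin.symm (1, r.1.1.2)⟩, by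
      obtain ⟨⟨⟨y, τ⟩, hτ, hy⟩, h0⟩ := r
      simp only at h0 ⊢
      refine ⟨(H3 _).mpr ⟨h0, hτ⟩, (H4 _ _ h0).mpr ⟨?_, ?_⟩⟩
      · have : (1 : Fin (n+2)) = (0 : Fin (n+1)).succ := by simp
        rw [this, Fin.cons_succ, Fin.cons_zero]
      · intro j
        simpa [Fin.cons_succ] using hy j⟩, by simp⟩
  left_inv q := by
    obtain ⟨⟨⟨x, σ⟩, hσ, hx⟩, h1⟩ := q
    simp only at h1
    apply Subtype.ext
    apply Subtype.ext
    have hx1 : x 1 = x 0 := by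
      have := hx 0
      simp only at this
      rwa [h1] at this
    refine Prod.ext ?_ ?_
    · simp only
      have h2 : (x ∘ Fin.succ) 0 = x 0 := by
        simp only [Function.comp_apply]
        rw [show (0 : Fin (n+1)).succ = (1 : Fin (n+2)) by simp, hx1]
      rw [h2]
      exact Fin.cons_self_tail x
    · simp only
      conv_rhs => rw [decomp_eq σ, h1]
  right_inv r := by
    obtain ⟨⟨⟨y, τ⟩, hτ, hy⟩, h0⟩ := r
    apply Subtype.ext
    apply Subtype.ext
    refine Prod.ext ?_ ?_
    · funext j
      simp [Fin.cons_succ]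
    · simp

section Conj
variable {n : ℕ}

lemma conj_sq (e σ : Perm (Fin n)) (hσ : σ * σ = 1) : (e⁻¹ * σ * e) * (e⁻¹ * σ * e) = 1 := by
  have h : (e⁻¹ * σ * e) * (e⁻¹ * σ * e) = e⁻¹ * (σ * σ) * e := by group
  rw [h, hσ, mul_one, inv_mul_cancel]

lemma conj_x (e σ : Perm (Fin n)) (x : Fin n → ZMod 2) (hx : ∀ i, x (σ i) = x i) :
    ∀ i, (x ∘ e) ((e⁻¹ * σ * e) i) = (x ∘ e) i := by
  intro i
  simp only [Function.comp_apply, Perm.mul_apply, Equiv.Perm.coe_inv, Equiv.apply_symm_apply]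
  exact hx (e i)

/-- conjugate an element of `A n` by a permutation `e`. -/
def conjA (e : Perm (Fin n)) (q : A n) : A n :=
  ⟨(q.1.1 ∘ e, e⁻¹ * q.1.2 * e), conj_sq e q.1.2 q.2.1, conj_x e q.1.2 q.1.1 q.2.2⟩

def conjEquiv (p : Fin (n+2)) (hp : p ≠ 0) : fib (n+1) p ≃ fib (n+1) 1 := by
  set e : Perm (Fin (n+2)) := Equiv.swap 1 p with he
  have he0 : e 0 = 0 := Equiv.swap_apply_of_ne_of_ne (by simp [Fin.ext_iff]) (Ne.symm hp)
  have heinv : e⁻¹ = e := Equiv.swap_inv 1 p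
  have hee : e * e = 1 := Equiv.swap_mul_self 1 p
  refine
  { toFun := fun q => ⟨conjA e q.1, ?_⟩
    invFun := fun r => ⟨conjA e r.1, ?_⟩
    left_inv := fun q => ?_
    right_inv := fun r => ?_ }
  · show (e⁻¹ * q.1.1.2 * e) 0 = 1
    rw [heinv]
    simp only [Perm.mul_apply]
    rw [he0, q.2, he, Equiv.swap_apply_right]
  · show (e⁻¹ * r.1.1.2 * e) 0 = p
    rw [heinv]
    simp only [Perm.mul_apply]
    rw [he0, r.2, he, Equiv.swap_apply_left]
  · apply Subtype.ext
    apply Subtype.ext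
    refine Prod.ext ?_ ?_
    · funext i
      show q.1.1.1 (e (e i)) = q.1.1.1 i
      rw [he, Equiv.swap_apply_self]
    · show e⁻¹ * (e⁻¹ * q.1.1.2 * e) * e = q.1.1.2
      rw [heinv]
      have : e * (e * q.1.1.2 * e) * e = (e * e) * q.1.1.2 * (e * e) := by group
      rw [this, hee, one_mul, mul_one]
  · apply Subtype.ext
    apply Subtype.ext
    refine Prod.ext ?_ ?_
    · funext i
      show r.1.1.1 (e (e i)) = r.1.1.1 i
      rw [he, Equiv.swap_apply_self]
    · show e⁻¹ * (e⁻¹ * r.1.1.2 * e) * e = r.1.1.2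
      rw [heinv]
      have : e * (e * r.1.1.2 * e) * e = (e * e) * r.1.1.2 * (e * e) := by group
      rw [this, hee, one_mul, mul_one]

end Conj

lemma card_fib0 (n : ℕ) : Nat.card (fib n 0) = 2 * Nat.card (A n) := by
  rw [Nat.card_congr (fib0Equiv n), Nat.card_prod, Nat.card_zmod]

lemma card_sigma_fib (n : ℕ) : Nat.card (A (n+1)) = ∑ p : Fin (n+1), Nat.card (fib n p) := by
  letI : Fintype (A (n+1)) := Fintype.ofFinite _
  letI : ∀ p, Fintype (fib n p) := fun _ => Fintype.ofFinite _
  rw [Nat.card_congr (Equiv.sigmaFiberEquiv (fun q : A (n+1) => q.1.2 0)).symm,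
    Nat.card_eq_fintype_card, Fintype.card_sigma]
  refine Finset.sum_congr rfl fun p _ => ?_
  rw [Nat.card_eq_fintype_card]
  exact Fintype.card_congr (Equiv.refl _)

lemma cardA0 : Nat.card (A 0) = 1 := by
  haveI : Unique (A 0) := {
    default := ⟨(Fin.elim0, 1), by constructor; · ext i; exact i.elim0
                                   · intro i; exact i.elim0⟩
    uniq := by
      intro q
      apply Subtype.ext
      refine Prod.ext ?_ ?_
      · funext i; exact i.elim0
      · apply Subsingleton.elim }
  exact Nat.card_unique

lemma cardA1 : Nat.card (A 1) = 2 := by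
  have e : A 1 ≃ ZMod 2 := {
    toFun := fun q => q.1.1 0
    invFun := fun b => ⟨(fun _ => b, 1), by constructor; · rfl
                                            · intro i; rfl⟩
    left_inv := by
      intro q
      apply Subtype.ext
      refine Prod.ext ?_ ?_
      · funext i
        have : i = 0 := Subsingleton.elim i 0
        rw [this]
      · apply Subsingleton.elim
    right_inv := fun b => rfl }
  rw [Nat.card_congr e, Nat.card_zmod]

lemma cardA_rec (n : ℕ) :
    Nat.card (A (n+2)) = 2 * Nat.card (A (n+1)) + 2 * (n+1) * Nat.card (A n) := by
  rw [card_sigma_fib (n+1), Fin.sum_univ_succ, card_fib0 (n+1)]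
  have h1 : ∀ i : Fin (n+1), Nat.card (fib (n+1) i.succ) = 2 * Nat.card (A n) := by
    intro i
    rw [Nat.card_congr (conjEquiv i.succ (Fin.succ_ne_zero i)),
      Nat.card_congr (fib1Equiv n), card_fib0 n]
  simp only [h1, Finset.sum_const, Finset.card_univ, Fintype.card_fin, smul_eq_mul]
  ring

def cnI : ℕ → ℕ
  | 0 => 1
  | 1 => 2
  | (n+2) => 2 * cnI (n+1) + 2 * (n+1) * cnI n

noncomputable def tq (n k : ℕ) : ℚ :=
  if 2*k ≤ n then
    (2 : ℚ) ^ n * n.factorial / (2 ^ (2 * k) * k.factorial * (n - 2 * k).factorial)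
  else 0

lemma tq_def (n k : ℕ) : tq n k =
    (if 2*k ≤ n then
      (2 : ℚ) ^ n * n.factorial / (2 ^ (2 * k) * k.factorial * (n - 2 * k).factorial)
    else 0) :=
  rfl

lemma fac_ne (m : ℕ) : ((m.factorial : ℚ)) ≠ 0 :=
  Nat.cast_ne_zero.mpr (Nat.factorial_ne_zero m)

lemma tq_step (n k : ℕ) : tq (n+2) (k+1) = 2 * tq (n+1) (k+1) + 2*(n+1) * tq n k := by
  rcases lt_trichotomy (2*k) n with h | h | h
  · -- 2k+1 ≤ n
    obtain ⟨m, rfl⟩ : ∃ m, n = 2*k+1+m := ⟨n - (2*k+1), by omega⟩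
    rw [tq_def, tq_def, tq_def, if_pos (by omega), if_pos (by omega), if_pos (by omega)]
    have e1 : 2*k+1+m+2 - 2*(k+1) = m+1 := by omega
    have e2 : 2*k+1+m+1 - 2*(k+1) = m := by omega
    have e3 : 2*k+1+m - 2*k = m+1 := by omega
    rw [e1, e2, e3]
    have f1 : ((2*k+1+m+2).factorial : ℚ) = (2*k+1+m+2) * ((2*k+1+m+1) * (2*k+1+m).factorial) := by
      rw [show 2*k+1+m+2 = (2*k+1+m+1)+1 by ring, Nat.factorial_succ, Nat.factorial_succ]
      push_cast; ring
    have f2 : ((m+1).factorial : ℚ) = (m+1) * m.factorial := by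
      rw [Nat.factorial_succ]; push_cast; ring
    have f3 : ((k+1).factorial : ℚ) = (k+1) * k.factorial := by
      rw [Nat.factorial_succ]; push_cast; ring
    have f4 : ((2*k+1+m+1).factorial : ℚ) = (2*k+1+m+1) * (2*k+1+m).factorial := by
      rw [Nat.factorial_succ]; push_cast; ring
    rw [f1, f2, f3, f4]
    have h1 := fac_ne m
    have h2 := fac_ne k
    have h3 := fac_ne (2*k+1+m)
    have hm1 : ((m : ℚ)+1) ≠ 0 := by positivity
    have hk1 : ((k : ℚ)+1) ≠ 0 := by positivity
    field_simp
    push_cast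
    ring
  · -- n = 2k
    subst h
    rw [tq_def, tq_def, tq_def, if_pos (by omega), if_neg (by omega), if_pos (by omega)]
    have e1 : 2*k+2 - 2*(k+1) = 0 := by omega
    have e2 : 2*k - 2*k = 0 := by omega
    rw [e1, e2]
    have f1 : ((2*k+2).factorial : ℚ) = (2*k+2) * ((2*k+1) * (2*k).factorial) := by
      rw [show 2*k+2 = (2*k+1)+1 by ring, Nat.factorial_succ, Nat.factorial_succ]
      push_cast; ring
    have f3 : ((k+1).factorial : ℚ) = (k+1) * k.factorial := by
      rw [Nat.factorial_succ]; push_cast; ring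
    rw [f1, f3]
    have h2 := fac_ne k
    have h3 := fac_ne (2*k)
    have hk1 : ((k : ℚ)+1) ≠ 0 := by positivity
    field_simp
    push_cast
    ring
  · -- 2k ≥ n+1
    rw [tq_def, tq_def, tq_def, if_neg (by omega), if_neg (by omega), if_neg (by omega)]
    norm_num

lemma tq_zero (n : ℕ) : tq n 0 = 2^n := by
  rw [tq_def, if_pos (by omega)]
  simp only [Nat.mul_zero, Nat.sub_zero, pow_zero, Nat.factorial_zero, Nat.cast_one, one_mul,
    mul_one]
  rw [mul_div_assoc, div_self (fac_ne n), mul_one]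

noncomputable def gq (n : ℕ) : ℚ := ∑ k ∈ Finset.range (n+1), tq n k

lemma gq_rec (n : ℕ) : gq (n+2) = 2 * gq (n+1) + 2*(n+1) * gq n := by
  have L : gq (n+2) = (∑ k ∈ Finset.range (n+2), tq (n+2) (k+1)) + tq (n+2) 0 :=
    Finset.sum_range_succ' _ (n+2)
  have R1 : gq (n+1) = (∑ k ∈ Finset.range (n+1), tq (n+1) (k+1)) + tq (n+1) 0 :=
    Finset.sum_range_succ' _ (n+1)
  have z1 : tq (n+1) (n+1+1) = 0 := by rw [tq_def, if_neg (by omega)]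
  have z2 : tq n (n+1) = 0 := by rw [tq_def, if_neg (by omega)]
  have E1 : ∑ k ∈ Finset.range (n+2), tq (n+1) (k+1) = ∑ k ∈ Finset.range (n+1), tq (n+1) (k+1) := by
    rw [Finset.sum_range_succ, z1, add_zero]
  have E2 : ∑ k ∈ Finset.range (n+2), tq n k = gq n := by
    rw [Finset.sum_range_succ, z2, add_zero]; rfl
  have h0 : tq (n+2) 0 = 2 * tq (n+1) 0 := by
    rw [tq_zero, tq_zero, pow_succ, mul_comm]
  have key : ∑ k ∈ Finset.range (n+2), tq (n+2) (k+1)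
      = ∑ k ∈ Finset.range (n+2), (2 * tq (n+1) (k+1) + 2*(n+1) * tq n k) :=
    Finset.sum_congr rfl fun k _ => tq_step n k
  rw [L, key, Finset.sum_add_distrib, ← Finset.mul_sum, ← Finset.mul_sum, E1, E2, R1, h0]
  ring

lemma cnI_eq_gq (n : ℕ) : (cnI n : ℚ) = gq n := by
  induction n using Nat.strong_induction_on with
  | _ n ih =>
    match n with
    | 0 => norm_num [cnI, gq, tq_zero]
    | 1 =>
      rw [show cnI 1 = 2 from rfl, gq, Finset.sum_range_succ, Finset.sum_range_one, tq_zero,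
        tq_def, if_neg (by omega)]
      norm_num
    | (n+2) =>
      rw [show cnI (n+2) = 2 * cnI (n+1) + 2 * (n+1) * cnI n from rfl, gq_rec]
      push_cast
      rw [ih (n+1) (by omega), ih n (by omega)]

lemma final_sum (n : ℕ) :
    (∑ k ∈ Finset.range (n / 2 + 1),
        (2 : ℚ) ^ n * n.factorial /
          (2 ^ (2 * k) * k.factorial * (n - 2 * k).factorial)) = gq n := by
  have h1 : (∑ k ∈ Finset.range (n / 2 + 1),
      (2 : ℚ) ^ n * n.factorial /
        (2 ^ (2 * k) * k.factorial * (n - 2 * k).factorial))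
      = ∑ k ∈ Finset.range (n / 2 + 1), tq n k := by
    refine Finset.sum_congr rfl fun k hk => ?_
    rw [Finset.mem_range] at hk
    rw [tq_def, if_pos (by omega)]
  rw [h1, gq]
  refine Finset.sum_subset (fun k hk => ?_) (fun k hk hk2 => ?_)
  · rw [Finset.mem_range] at hk ⊢; omega
  · rw [Finset.mem_range] at hk hk2
    rw [tq_def, if_neg (by omega)]


lemma cardA_eq (n : ℕ) : Nat.card (A n) = cnI n := by
  induction n using Nat.strong_induction_on with
  | _ n ih =>
    match n with
    | 0 => rw [cardA0]; rfl
    | 1 => rw [cardA1]; rfl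
    | (n+2) =>
      rw [show cnI (n+2) = 2 * cnI (n+1) + 2 * (n+1) * cnI n from rfl, cardA_rec,
        ih (n+1) (by omega), ih n (by omega)]

end CnAux

theorem cn_involution_count (n : ℕ) (hn : 1 ≤ n) :
    (Nat.card {w : Cn n // w ^ 2 = 1} : ℚ) =
      ∑ k ∈ Finset.range (n / 2 + 1),
        (2 : ℚ) ^ n * n.factorial /
          (2 ^ (2 * k) * k.factorial * (n - 2 * k).factorial) := by
  rw [Nat.card_congr (CnAux.cnEquivA n), CnAux.cardA_eq n, CnAux.cnI_eq_gq n,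
    ← CnAux.final_sum n]
end

section
/- For every integer n ≥ 3 with n ≠ 4, the number of subgroups of the hyperoctahedral group C_n that are isomorphic to the symmetric group on n letters is exactly 2^n: Nat.card {H : Subgroup C_n // Nonempty (H ≃* Equiv.Perm (Fin n))} = 2^n. -/
set_option linter.unnecessarySeqFocus false
set_option linter.unusedVariables false

open Equiv Equiv.Perm

variable {α : Type*} [DecidableEq α] [Fintype α]

/-- The sign of a permutation as an element of `ZMod 2`. -/
def s2 (σ : Perm α) : ZMod 2 := if Perm.sign σ = 1 then 0 else 1

lemma s2_mul (σ τ : Perm α) : s2 (σ * τ) = s2 σ + s2 τ := by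
  unfold s2
  rw [map_mul]
  rcases Int.units_eq_one_or (Perm.sign σ) with h | h <;>
    rcases Int.units_eq_one_or (Perm.sign τ) with h' | h' <;>
      simp [h, h'] <;> decide

lemma s2_one : s2 (1 : Perm α) = 0 := by simp [s2]

lemma s2_inv (σ : Perm α) : s2 σ⁻¹ = s2 σ := by simp [s2]

lemma s2_swap {a b : α} (h : a ≠ b) : s2 (swap a b) = 1 := by
  simp [s2, sign_swap h]

lemma hom_eq_s2 (φ : Perm α → ZMod 2) (hφ : ∀ σ τ, φ (σ * τ) = φ σ + φ τ)
    {a b : α} (hab : a ≠ b) : ∀ σ, φ σ = φ (swap a b) * s2 σ := by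
  have h1 : φ 1 = 0 := by
    have := hφ 1 1
    rw [one_mul] at this
    have h2 : ∀ x : ZMod 2, x = x + x → x = 0 := by decide
    exact h2 _ this
  have hinv : ∀ σ, φ σ⁻¹ = φ σ := by
    intro σ
    have := hφ σ σ⁻¹
    rw [mul_inv_cancel, h1] at this
    have h2 : ∀ x y : ZMod 2, 0 = x + y → y = x := by decide
    exact h2 _ _ this
  have hswap : ∀ x y : α, x ≠ y → φ (swap x y) = φ (swap a b) := by
    intro x y hxy
    obtain ⟨g, hg⟩ := isConj_iff.mp (isConj_swap hab hxy)
    rw [← hg, hφ, hφ, hinv]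
    have h2 : ∀ u v : ZMod 2, u + v + u = v := by decide
    exact h2 _ _
  intro σ
  have hmem : σ ∈ Subgroup.closure { σ : Perm α | IsSwap σ } := by
    rw [closure_isSwap]; trivial
  induction hmem using Subgroup.closure_induction with
  | mem x hx =>
    obtain ⟨u, v, huv, rfl⟩ := hx
    rw [hswap u v huv, s2_swap huv, mul_one]
  | one => rw [h1, s2_one, mul_zero]
  | mul x y _ _ ihx ihy => rw [hφ, s2_mul, mul_add, ihx, ihy]
  | inv x _ ihx => rw [hinv, s2_inv, ihx]


lemma exists_avoid {n : ℕ} (s : Finset (Fin n)) (h : s.card < n) : ∃ c, c ∉ s := by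
  have : 0 < sᶜ.card := by
    rw [Finset.card_compl, Fintype.card_fin]; omega
  obtain ⟨c, hc⟩ := Finset.card_pos.mp this
  exact ⟨c, Finset.mem_compl.mp hc⟩

lemma exists_third {n : ℕ} (h3 : 3 ≤ n) (a b : Fin n) : ∃ c, c ≠ a ∧ c ≠ b := by
  obtain ⟨c, hc⟩ := exists_avoid {a, b} (by
    calc ({a, b} : Finset (Fin n)).card ≤ ({b} : Finset (Fin n)).card + 1 :=
      Finset.card_insert_le _ _
    _ < n := by simp; omega)
  simp only [Finset.mem_insert, Finset.mem_singleton] at hc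
  push_neg at hc
  exact ⟨c, hc⟩

lemma exists_fifth {n : ℕ} (h5 : 5 ≤ n) (a b c d : Fin n) :
    ∃ e, e ≠ a ∧ e ≠ b ∧ e ≠ c ∧ e ≠ d := by
  obtain ⟨e, he⟩ := exists_avoid {a, b, c, d} (by
    calc ({a, b, c, d} : Finset (Fin n)).card
        ≤ ({b, c, d} : Finset (Fin n)).card + 1 := Finset.card_insert_le _ _
    _ ≤ ({c, d} : Finset (Fin n)).card + 2 := by
        have := Finset.card_insert_le b ({c, d} : Finset (Fin n)); omega
    _ ≤ ({d} : Finset (Fin n)).card + 3 := by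
        have := Finset.card_insert_le c ({d} : Finset (Fin n)); omega
    _ < n := by simp; omega)
  simp only [Finset.mem_insert, Finset.mem_singleton] at he
  push_neg at he
  exact ⟨e, he⟩

/-- A normal subgroup of `Perm (Fin n)` all of whose elements square to the identity
is trivial, provided `3 ≤ n` and `n ≠ 4`. -/
lemma normal_two_torsion_eq_bot {n : ℕ} (h3 : 3 ≤ n) (h4 : n ≠ 4)
    (K : Subgroup (Perm (Fin n))) (hN : K.Normal) (hK : ∀ k ∈ K, k * k = 1) : K = ⊥ := by
  by_contra hbot
  obtain ⟨k, hkK, hk1⟩ : ∃ k ∈ K, k ≠ 1 := by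
    by_contra h
    push_neg at h
    exact hbot ((Subgroup.eq_bot_iff_forall K).mpr h)
  have hkk' : ∀ k ∈ K, ∀ x, k (k x) = x := by
    intro k hkK x
    calc k (k x) = (k * k) x := rfl
    _ = x := by rw [hK k hkK]; rfl
  -- every nontrivial element of K is fixed-point-free
  have hfree : ∀ k ∈ K, k ≠ 1 → ∀ c, k c ≠ c := by
    intro k hkK hk1 c hc
    obtain ⟨a, ha⟩ : ∃ a, k a ≠ a := by
      by_contra h
      push_neg at h
      exact hk1 (Equiv.ext h)
    have hkk : ∀ x, k (k x) = x := hkk' k hkK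
    have hca : c ≠ a := fun h => ha (h ▸ hc)
    have hcb : c ≠ k a := by
      intro h
      rw [h, hkk] at hc
      exact ha hc.symm
    have hk'K : Equiv.swap (k a) c * k * (Equiv.swap (k a) c)⁻¹ ∈ K := hN.conj_mem k hkK _
    have hcomm : k * (Equiv.swap (k a) c * k * (Equiv.swap (k a) c)⁻¹)
        = (Equiv.swap (k a) c * k * (Equiv.swap (k a) c)⁻¹) * k := by
      have h1 := hK _ (K.mul_mem hkK hk'K)
      have h2 := hK _ hkK
      have h3 := hK _ hk'K
      have hkinv : k⁻¹ = k := inv_eq_of_mul_eq_one_left h2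
      have hk'inv : (Equiv.swap (k a) c * k * (Equiv.swap (k a) c)⁻¹)⁻¹
          = Equiv.swap (k a) c * k * (Equiv.swap (k a) c)⁻¹ := inv_eq_of_mul_eq_one_left h3
      have h4 := inv_eq_of_mul_eq_one_left h1
      calc k * (Equiv.swap (k a) c * k * (Equiv.swap (k a) c)⁻¹)
          = (k * (Equiv.swap (k a) c * k * (Equiv.swap (k a) c)⁻¹))⁻¹ := h4.symm
      _ = (Equiv.swap (k a) c * k * (Equiv.swap (k a) c)⁻¹)⁻¹ * k⁻¹ := mul_inv_rev _ _
      _ = (Equiv.swap (k a) c * k * (Equiv.swap (k a) c)⁻¹) * k := by rw [hkinv, hk'inv]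
    have lhs : (k * (Equiv.swap (k a) c * k * (Equiv.swap (k a) c)⁻¹)) a = c := by
      simp only [Equiv.Perm.mul_apply, Equiv.swap_inv]
      rw [Equiv.swap_apply_of_ne_of_ne (Ne.symm ha) (Ne.symm hca), Equiv.swap_apply_left, hc]
    have rhs : ((Equiv.swap (k a) c * k * (Equiv.swap (k a) c)⁻¹) * k) a = k a := by
      simp only [Equiv.Perm.mul_apply, Equiv.swap_inv]
      rw [Equiv.swap_apply_left, hc, Equiv.swap_apply_right]
    rw [hcomm] at lhs
    rw [lhs] at rhs
    exact hcb rhs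
  -- pick a point moved by k
  obtain ⟨a, ha⟩ : ∃ a, k a ≠ a := by
    by_contra h
    push_neg at h
    exact hk1 (Equiv.ext h)
  have hkk : ∀ x, k (k x) = x := hkk' k hkK
  rcases Nat.lt_or_ge n 5 with h5 | h5
  · -- n = 3
    have hn3 : n = 3 := by omega
    subst hn3
    obtain ⟨c, hca, hcb⟩ := exists_third (le_refl 3) a (k a)
    have h1 : k c ≠ c := hfree k hkK hk1 c
    have h2 : k c ≠ k a := fun h => hca (k.injective h)
    have h3 : k c ≠ a := by
      intro h
      have := hkk c
      rw [h] at this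
      exact hcb this.symm
    revert h1 h2 h3 hca hcb ha
    generalize k c = x
    generalize k a = y
    revert x y a c
    decide
  · -- n ≥ 5
    obtain ⟨c, hca, hcb⟩ := exists_third h3 a (k a)
    have hdc : k c ≠ c := hfree k hkK hk1 c
    have hda : k c ≠ a := by
      intro h
      have := hkk c
      rw [h] at this
      exact hcb this.symm
    obtain ⟨e, hea, heb, hec, hed⟩ := exists_fifth h5 a (k a) c (k c)
    have hk'K : Equiv.swap (k a) c * k * (Equiv.swap (k a) c)⁻¹ ∈ K := hN.conj_mem k hkK _
    have hpK : k * (Equiv.swap (k a) c * k * (Equiv.swap (k a) c)⁻¹) ∈ K :=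
      K.mul_mem hkK hk'K
    have hke_b : k e ≠ k a := fun h => hea (k.injective h)
    have hke_c : k e ≠ c := by
      intro h
      have := hkk e
      rw [h] at this
      exact hed this.symm
    have hpe : (k * (Equiv.swap (k a) c * k * (Equiv.swap (k a) c)⁻¹)) e = e := by
      simp only [Equiv.Perm.mul_apply, Equiv.swap_inv]
      rw [Equiv.swap_apply_of_ne_of_ne heb hec,
        Equiv.swap_apply_of_ne_of_ne hke_b hke_c, hkk]
    have hpa : (k * (Equiv.swap (k a) c * k * (Equiv.swap (k a) c)⁻¹)) a = k c := by
      simp only [Equiv.Perm.mul_apply, Equiv.swap_inv]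
      rw [Equiv.swap_apply_of_ne_of_ne (Ne.symm ha) (Ne.symm hca), Equiv.swap_apply_left]
    have hp1 : k * (Equiv.swap (k a) c * k * (Equiv.swap (k a) c)⁻¹) ≠ 1 := by
      intro h
      rw [h] at hpa
      exact hda hpa.symm
    exact hfree _ hpK hp1 e hpe

/-- The cocycle condition for the permutation action on `(ZMod 2)^n`. -/
def IsCocycle (n : ℕ) (f : Perm (Fin n) → Fin n → ZMod 2) : Prop :=
  ∀ σ τ : Perm (Fin n), ∀ i, f (σ * τ) i = f σ i + f τ (σ⁻¹ i)

/-- The group of 1-cocycles. -/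
def Z1 (n : ℕ) : AddSubgroup (Perm (Fin n) → Fin n → ZMod 2) where
  carrier := {f | IsCocycle n f}
  add_mem' := by
    intro f g hf hg σ τ i
    simp only [Pi.add_apply, hf σ τ i, hg σ τ i]
    ring
  zero_mem' := by intro σ τ i; simp
  neg_mem' := by
    intro f hf σ τ i
    simp only [Pi.neg_apply, hf σ τ i]
    ring

/-- The parametrization of cocycles by a coboundary datum `v` plus a multiple of the
sign cocycle. -/
def Fmap (n : ℕ) : ((Fin n → ZMod 2) × ZMod 2) →+ Z1 n where
  toFun p := ⟨fun σ i => p.1 i + p.1 (σ⁻¹ i) + s2 σ * p.2, by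
    intro σ τ i
    have h2 : ∀ a b c s t d : ZMod 2,
        a + c + (s + t) * d = (a + b + s * d) + (b + c + t * d) := by decide
    simp only []
    rw [mul_inv_rev, Equiv.Perm.mul_apply, s2_mul]
    exact h2 _ _ _ _ _ _⟩
  map_zero' := by
    apply Subtype.ext
    funext σ i
    simp
  map_add' p q := by
    apply Subtype.ext
    funext σ i
    show (p.1 + q.1) i + (p.1 + q.1) (σ⁻¹ i) + s2 σ * (p.2 + q.2) = _
    simp only [Pi.add_apply]
    show _ = (p.1 i + p.1 (σ⁻¹ i) + s2 σ * p.2) + (q.1 i + q.1 (σ⁻¹ i) + s2 σ * q.2)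
    ring

lemma mem_ker_Fmap_iff {n : ℕ} (p : (Fin n → ZMod 2) × ZMod 2) :
    p ∈ (Fmap n).ker ↔ ∀ σ : Perm (Fin n), ∀ i, p.1 i + p.1 (σ⁻¹ i) + s2 σ * p.2 = 0 := by
  rw [AddMonoidHom.mem_ker]
  constructor
  · intro h σ i
    have := congrFun (congrFun (Subtype.ext_iff.mp h) σ) i
    exact this
  · intro h
    apply Subtype.ext
    funext σ i
    exact h σ i

lemma card_ker_Fmap {n : ℕ} (h3 : 3 ≤ n) : Nat.card (AddMonoidHom.ker (Fmap n)) = 2 := by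
  have hz : (0 : ℕ) < n := by omega
  have ho : (1 : ℕ) < n := by omega
  have ht : (2 : ℕ) < n := by omega
  set z : Fin n := ⟨0, hz⟩ with hzdef
  set o : Fin n := ⟨1, ho⟩ with hodef
  set t : Fin n := ⟨2, ht⟩ with htdef
  have hzo : z ≠ o := by simp [hzdef, hodef, Fin.ext_iff]
  have e : (AddMonoidHom.ker (Fmap n)) ≃ ZMod 2 := {
    toFun := fun x => x.1.1 z
    invFun := fun c => ⟨(fun _ => c, 0), by
      rw [mem_ker_Fmap_iff]
      intro σ i
      have : ∀ c s : ZMod 2, c + c + s * 0 = 0 := by decide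
      exact this c (s2 σ)⟩
    left_inv := by
      intro x
      obtain ⟨⟨v, d⟩, hx⟩ := x
      rw [mem_ker_Fmap_iff] at hx
      have hd : d = 0 := by
        have h1 := hx (Equiv.swap z o) t
        have hfix : (Equiv.swap z o)⁻¹ t = t := by
          rw [Equiv.swap_inv]
          apply Equiv.swap_apply_of_ne_of_ne <;> simp [hzdef, hodef, htdef, Fin.ext_iff]
        rw [hfix, s2_swap hzo] at h1
        have : ∀ a d : ZMod 2, a + a + 1 * d = 0 → d = 0 := by decide
        exact this _ _ h1
      subst hd
      have hv : ∀ i, v i = v z := by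
        intro i
        have h1 := hx (Equiv.swap z i) i
        have hswap : (Equiv.swap z i)⁻¹ i = z := by
          rw [Equiv.swap_inv, Equiv.swap_apply_right]
        rw [hswap] at h1
        have : ∀ a b s : ZMod 2, a + b + s * 0 = 0 → a = b := by decide
        exact this _ _ _ h1
      apply Subtype.ext
      apply Prod.ext
      · funext i
        exact (hv i).symm
      · rfl
    right_inv := fun c => rfl }
  rw [Nat.card_congr e]
  simp [Nat.card_eq_fintype_card]

lemma s2_ofSubtype {n : ℕ} {q : Fin n → Prop} [DecidablePred q]
    (π : Perm (Subtype q)) : s2 (Equiv.Perm.ofSubtype π) = s2 π := by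
  simp [s2, Equiv.Perm.sign_ofSubtype]

lemma Fmap_surjective {n : ℕ} (h3 : 3 ≤ n) : Function.Surjective (Fmap n) := by
  rintro ⟨f, hf⟩
  have hchar : ∀ x : ZMod 2, x + x = 0 := by decide
  have hz : (0 : ℕ) < n := by omega
  have ho : (1 : ℕ) < n := by omega
  have ht : (2 : ℕ) < n := by omega
  set z : Fin n := ⟨0, hz⟩ with hzdef
  set o : Fin n := ⟨1, ho⟩ with hodef
  set t : Fin n := ⟨2, ht⟩ with htdef
  -- the "restriction to the stabilizer of z, evaluated at z" homomorphism
  set φ : Perm {x : Fin n // x ≠ z} → ZMod 2 :=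
    fun π => f (Equiv.Perm.ofSubtype π) z with hφdef
  have hofz : ∀ π : Perm {x : Fin n // x ≠ z}, Equiv.Perm.ofSubtype π z = z := by
    intro π
    apply Equiv.Perm.ofSubtype_apply_of_not_mem
    simp
  have hφ : ∀ π π', φ (π * π') = φ π + φ π' := by
    intro π π'
    show f (Equiv.Perm.ofSubtype (π * π')) z = _
    rw [map_mul, hf]
    have hinv : (Equiv.Perm.ofSubtype π)⁻¹ z = z := by
      rw [← map_inv]
      exact hofz π⁻¹
    rw [hinv]
  have hoz : (o : Fin n) ≠ z := by simp [hodef, hzdef, Fin.ext_iff]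
  have htz : (t : Fin n) ≠ z := by simp [htdef, hzdef, Fin.ext_iff]
  have hab : (⟨o, hoz⟩ : {x : Fin n // x ≠ z}) ≠ ⟨t, htz⟩ := by
    simp [Subtype.ext_iff, hodef, htdef, Fin.ext_iff]
  set δ : ZMod 2 := φ (Equiv.swap ⟨o, hoz⟩ ⟨t, htz⟩) with hδdef
  have hstab := hom_eq_s2 φ hφ hab
  -- for permutations fixing z, the value of f at z is δ · sign
  have hkey : ∀ h : Perm (Fin n), h z = z → f h z = δ * s2 h := by
    intro h hzz
    have h₁ : ∀ x, h x ≠ z ↔ x ≠ z := by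
      intro x
      rw [Iff.comm]
      constructor
      · intro hx hcontra
        exact hx (h.injective (hcontra.trans hzz.symm))
      · intro hx hxz
        rw [hxz, hzz] at hx
        exact hx rfl
    have h₂ : ∀ x, h x ≠ x → x ≠ z := by
      intro x hx hxz
      rw [hxz, hzz] at hx
      exact hx rfl
    have heq : Equiv.Perm.ofSubtype (h.subtypePerm h₁) = h :=
      Equiv.Perm.ofSubtype_subtypePerm h₁ h₂
    calc f h z = φ (h.subtypePerm h₁) := by rw [hφdef]; simp only []; rw [heq]
    _ = δ * s2 (h.subtypePerm h₁) := hstab _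
    _ = δ * s2 h := by rw [← s2_ofSubtype (h.subtypePerm h₁), heq]
  -- the twisted function f₂ σ i = f σ i + s2 σ * δ  is a cocycle vanishing at (Stab z, z)
  have hf₂ : ∀ σ τ : Perm (Fin n), ∀ i,
      f (σ * τ) i + s2 (σ * τ) * δ
        = (f σ i + s2 σ * δ) + (f τ (σ⁻¹ i) + s2 τ * δ) := by
    intro σ τ i
    rw [hf, s2_mul]
    ring
  have hf₂stab : ∀ h : Perm (Fin n), h z = z → f h z + s2 h * δ = 0 := by
    intro h hzz
    rw [hkey h hzz, mul_comm]
    exact hchar _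
  -- the coboundary datum
  refine ⟨(fun i => f (Equiv.swap z i) i + s2 (Equiv.swap z i) * δ, δ), ?_⟩
  apply Subtype.ext
  funext σ i
  show (f (Equiv.swap z i) i + s2 (Equiv.swap z i) * δ)
      + (f (Equiv.swap z (σ⁻¹ i)) (σ⁻¹ i) + s2 (Equiv.swap z (σ⁻¹ i)) * δ)
      + s2 σ * δ = f σ i
  -- main identity: f₂ σ i = v i + v (σ⁻¹ i)
  have key : f σ i + s2 σ * δ
      = (f (Equiv.swap z i) i + s2 (Equiv.swap z i) * δ)
        + (f (Equiv.swap z (σ⁻¹ i)) (σ⁻¹ i) + s2 (Equiv.swap z (σ⁻¹ i)) * δ) := by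
    have hzz : ((Equiv.swap z i)⁻¹ * (σ * Equiv.swap z (σ⁻¹ i))) z = z := by
      simp only [Equiv.Perm.mul_apply, Equiv.swap_inv]
      rw [Equiv.swap_apply_left, ← Equiv.Perm.mul_apply σ σ⁻¹, mul_inv_cancel, Equiv.Perm.one_apply, Equiv.swap_apply_right]
    have e1 := hf₂ σ (Equiv.swap z (σ⁻¹ i)) i
    have e2 := hf₂ (Equiv.swap z i) ((Equiv.swap z i)⁻¹ * (σ * Equiv.swap z (σ⁻¹ i))) i
    rw [mul_inv_cancel_left] at e2
    have hswapz : (Equiv.swap z i)⁻¹ i = z := by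
      rw [Equiv.swap_inv, Equiv.swap_apply_right]
    rw [hswapz, hf₂stab _ hzz, add_zero] at e2
    rw [e2] at e1
    -- e1 : f₂(swap z i) i = f₂ σ i + f₂ (swap z (σ⁻¹ i)) (σ⁻¹ i)
    have halg : ∀ A B C : ZMod 2, B = A + C → A = B + C := by decide
    exact halg _ _ _ e1
  rw [← key]
  have halg2 : ∀ A B : ZMod 2, A + B + B = A := by decide
  exact halg2 _ _

lemma card_Z1 {n : ℕ} (h3 : 3 ≤ n) : Nat.card (Z1 n) = 2 ^ n := by
  have hsurj := Fmap_surjective h3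
  have e1 := QuotientAddGroup.quotientKerEquivOfSurjective (Fmap n) hsurj
  have htot : Nat.card ((Fin n → ZMod 2) × ZMod 2) = 2 ^ n * 2 := by
    rw [Nat.card_prod, Nat.card_fun]
    simp [Nat.card_eq_fintype_card]
  rw [AddSubgroup.card_eq_card_quotient_mul_card_addSubgroup (AddMonoidHom.ker (Fmap n)),
    card_ker_Fmap h3, Nat.card_congr e1.toEquiv] at htot
  omega

variable {n : ℕ}

instance : Finite (Cn n) :=
  Finite.of_injective (fun x : Cn n => (x.left, x.right))
    (fun _ _ h => SemidirectProduct.ext (congrArg Prod.fst h) (congrArg Prod.snd h))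

lemma zmod2_add_self (v : Fin n → ZMod 2) : v + v = 0 := by
  funext i
  have : ∀ a : ZMod 2, a + a = 0 := by decide
  exact this _

/-- The section of `rightHom` associated with a cocycle. -/
def sf (f : Z1 n) : Perm (Fin n) →* Cn n where
  toFun σ := ⟨Multiplicative.ofAdd (f.1 σ), σ⟩
  map_one' := by
    have h1 : f.1 1 = 0 := by
      funext i
      have h := f.2 1 1 i
      rw [one_mul] at h
      have h2 : ∀ x y : ZMod 2, x = x + y → y = 0 := by decide
      have := h2 _ _ h
      simpa using this
    apply SemidirectProduct.ext
    · show Multiplicative.ofAdd (f.1 1) = 1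
      rw [h1]
      rfl
    · rfl
  map_mul' σ τ := by
    apply SemidirectProduct.ext
    · show Multiplicative.ofAdd (f.1 (σ * τ))
        = Multiplicative.ofAdd (f.1 σ) * cnHom n σ (Multiplicative.ofAdd (f.1 τ))
      have h : f.1 (σ * τ) = f.1 σ + fun i => f.1 τ (σ⁻¹ i) := funext fun i => f.2 σ τ i
      exact congrArg Multiplicative.ofAdd h
    · rfl

lemma sf_right (f : Z1 n) (σ : Perm (Fin n)) : (sf f σ).right = σ := rfl

lemma sf_injective (f : Z1 n) : Function.Injective (sf f) := by
  intro σ τ h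
  have := congrArg SemidirectProduct.right h
  simpa [sf_right] using this

/-- The map from cocycles to subgroups isomorphic to `Sₙ`. -/
noncomputable def Phi (f : Z1 n) :
    {H : Subgroup (Cn n) // Nonempty (H ≃* Perm (Fin n))} :=
  ⟨(sf f).range, ⟨(MonoidHom.ofInjective (sf_injective f)).symm⟩⟩

lemma Phi_injective : Function.Injective (Phi (n := n)) := by
  intro f g h
  have hr : (sf f).range = (sf g).range := congrArg Subtype.val h
  apply Subtype.ext
  funext σ
  have hmem : sf f σ ∈ (sf g).range := by
    rw [← hr]
    exact ⟨σ, rfl⟩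
  obtain ⟨τ, hτ⟩ := hmem
  have hright : τ = σ := by
    have := congrArg SemidirectProduct.right hτ
    simpa [sf_right] using this
  subst hright
  have hleft := congrArg SemidirectProduct.left hτ
  have : Multiplicative.ofAdd (g.1 τ) = Multiplicative.ofAdd (f.1 τ) := hleft
  exact (congrArg Multiplicative.toAdd this).symm

lemma Phi_surjective (h3 : 3 ≤ n) (h4 : n ≠ 4) : Function.Surjective (Phi (n := n)) := by
  rintro ⟨H, ⟨e⟩⟩
  set r : H →* Perm (Fin n) := SemidirectProduct.rightHom.comp H.subtype with hrdef
  -- all elements of the kernel of r square to 1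
  have htor : ∀ x : H, x ∈ r.ker → x * x = 1 := by
    intro x hx
    have hright : (x : Cn n).right = 1 := hx
    apply Subtype.ext
    show (x : Cn n) * (x : Cn n) = 1
    apply SemidirectProduct.ext
    · show (x : Cn n).left * cnHom n (x : Cn n).right (x : Cn n).left = 1
      rw [hright, map_one]
      show (x : Cn n).left * (x : Cn n).left = 1
      have := zmod2_add_self (Multiplicative.toAdd (x : Cn n).left)
      exact congrArg Multiplicative.ofAdd this
    · show (x : Cn n).right * (x : Cn n).right = 1
      rw [hright, one_mul]
  -- transport the kernel to Perm via e, where it must be trivial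
  have hkerbot : r.ker = ⊥ := by
    have hmapnormal : (r.ker.map e.toMonoidHom).Normal :=
      Subgroup.Normal.map (MonoidHom.normal_ker r) e.toMonoidHom e.surjective
    have hmaptor : ∀ k ∈ r.ker.map e.toMonoidHom, k * k = 1 := by
      rintro k ⟨x, hxker, rfl⟩
      rw [← map_mul, htor x hxker, map_one]
    have hmapbot := normal_two_torsion_eq_bot h3 h4 _ hmapnormal hmaptor
    rw [Subgroup.map_eq_bot_iff] at hmapbot
    have hkere : e.toMonoidHom.ker = ⊥ := by
      rw [MonoidHom.ker_eq_bot_iff]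
      exact e.injective
    rw [hkere] at hmapbot
    exact le_bot_iff.mp hmapbot
  have hrinj : Function.Injective r := (MonoidHom.ker_eq_bot_iff r).mp hkerbot
  -- r is bijective by cardinality
  have hbij : Function.Bijective r := by
    have : Fintype H := Fintype.ofFinite _
    rw [Fintype.bijective_iff_injective_and_card]
    refine ⟨hrinj, ?_⟩
    rw [← Nat.card_eq_fintype_card, ← Nat.card_eq_fintype_card]
    exact Nat.card_congr e.toEquiv
  set q := MulEquiv.ofBijective r hbij with hqdef
  set S : Perm (Fin n) →* Cn n := H.subtype.comp (q.symm : Perm (Fin n) →* H) with hSdef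
  have hSright : ∀ σ, (S σ).right = σ := by
    intro σ
    show r (q.symm σ) = σ
    exact q.apply_symm_apply σ
  -- extract the cocycle
  set f : Perm (Fin n) → Fin n → ZMod 2 := fun σ => Multiplicative.toAdd (S σ).left with hfdef
  have hfZ1 : f ∈ Z1 n := by
    intro σ τ i
    have hmul := map_mul S σ τ
    have hleft := congrArg SemidirectProduct.left hmul
    -- (S σ * S τ).left = (S σ).left * cnHom n (S σ).right (S τ).left
    rw [SemidirectProduct.mul_left, hSright] at hleft
    exact congrFun (congrArg (⇑Multiplicative.toAdd) hleft) i
  have hSf : ∀ σ, sf ⟨f, hfZ1⟩ σ = S σ := by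
    intro σ
    apply SemidirectProduct.ext
    · rfl
    · rw [hSright]; rfl
  refine ⟨⟨f, hfZ1⟩, ?_⟩
  apply Subtype.ext
  show (sf ⟨f, hfZ1⟩).range = H
  apply le_antisymm
  · rintro x ⟨σ, rfl⟩
    rw [hSf]
    exact ((q.symm : Perm (Fin n) →* H) σ).2
  · intro x hx
    refine ⟨q ⟨x, hx⟩, ?_⟩
    rw [hSf]
    show H.subtype (q.symm (q ⟨x, hx⟩)) = x
    rw [q.symm_apply_apply]
    rfl

theorem cn_symmetric_subgroup_count (n : ℕ) (h3 : 3 ≤ n) (h4 : n ≠ 4) :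
    Nat.card {H : Subgroup (Cn n) // Nonempty (H ≃* Equiv.Perm (Fin n))} = 2 ^ n := by
  have hbij : Function.Bijective (Phi (n := n)) :=
    ⟨Phi_injective, Phi_surjective h3 h4⟩
  have hcongr := Nat.card_congr (Equiv.ofBijective _ hbij)
  rw [← hcongr]
  exact card_Z1 h3
end
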